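/- arXiv:1401.7023 — 4 statements merged into one kernel-verified Lean document; each statement's English description precedes it below -/
import Mathlib

section
/- Let Γ be a template of length ℓ and Γ̄ its conjugate (the image of Γ under n ↦ ℓ − n). Suppose φ and φ̄ are affine functions, φ(x_0,…,x_{ℓ−1}) = η_0 + ∑_{j=0}^{ℓ−1} η_{j+1} x_j and φ̄(x_0,…,x_{ℓ−1}) = η̄_0 + ∑_{j=0}^{ℓ−1} η̄_{j+1} x_j with rational coefficients, such that for every M, every β = (β_0,…,β_M) ∈ ℤ_{≥0}^{M+1}, and every shift k ≥ 0 with k+ℓ ≤ M+1: if Γ_{(k)} is β-semiallowable then Φ_β(Γ_{(k)}) = φ(β_k,…,β_{k+ℓ−1}), and if Γ̄_{(k)} is β-semiallowable then Φ_β(Γ̄_{(k)}) = φ̄(β_k,…,β_{k+ℓ−1}). Then η̄_0 = η_0 and η̄_i = η_{ℓ+1−i} for i = 1,…,ℓ. Consequently, setting ζ^i = ∑_{j=1}^{ℓ} C(j−1,i) η_j and ζ̄^i = ∑_{j=1}^{ℓ} C(j−1,i) η̄_j (binomial coefficients C(j−1,i)), one has ζ̄^0 = ζ^0 and ζ^1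 + ζ̄^1 = (ℓ−1)ζ^0. -/
open scoped Classical

/-- A long-edge graph: a finite multiset of weighted edges `(i, (j, ρ))` (an edge from `i`
to `j` of weight `ρ`) on the vertex set `ℕ`, with `i < j`, `ρ ≥ 1`, and no edge of
weight `1` connecting consecutive vertices. -/
structure LongEdgeGraph where
  edges : Multiset (ℕ × ℕ × ℕ)
  valid : ∀ e ∈ edges, e.1 < e.2.1 ∧ 1 ≤ e.2.2 ∧ ¬(e.2.1 = e.1 + 1 ∧ e.2.2 = 1)

namespace LongEdgeGraph

/-- The cogenus `δ(G) = ∑_e (ℓ(e)·ρ(e) − 1)`, where `ℓ(e)` is the length of `e`. -/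
def cogenus (G : LongEdgeGraph) : ℕ :=
  (G.edges.map fun e => (e.2.1 - e.1) * e.2.2 - 1).sum

/-- The multiplicity `μ(G) = ∏_e ρ(e)^2`. -/
def mult (G : LongEdgeGraph) : ℕ :=
  (G.edges.map fun e => e.2.2 ^ 2).prod

/-- `λ_j(G)`: the sum of the weights of the edges from `i` to `k` with `i < j ≤ k`. -/
def lam (G : LongEdgeGraph) (j : ℕ) : ℕ :=
  ((G.edges.filter fun e => e.1 < j ∧ j ≤ e.2.1).map fun e => e.2.2).sum

/-- `λ̄_j(G) = λ_j(G)` minus the number of edges of `G` from `j−1` to `j`. -/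
def lambar (G : LongEdgeGraph) (j : ℕ) : ℕ :=
  G.lam j - Multiset.card (G.edges.filter fun e => e.1 + 1 = j ∧ e.2.1 = j)

/-- The set of vertices of `G` with nonzero degree. -/
def verts (G : LongEdgeGraph) : Set ℕ :=
  {v | ∃ e ∈ G.edges, e.1 = v ∨ e.2.1 = v}

/-- `minv(G)`: the smallest vertex of `G` with nonzero degree. -/
noncomputable def minv (G : LongEdgeGraph) : ℕ := sInf G.verts

/-- `maxv(G)`: the largest vertex of `G` with nonzero degree. -/
noncomputable def maxv (G : LongEdgeGraph) : ℕ := sSup G.verts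

/-- The length `ℓ(G) = maxv(G) − minv(G)`. -/
noncomputable def lengthG (G : LongEdgeGraph) : ℕ := G.maxv - G.minv

/-- `ε_0(G)`: `1` if every edge incident to `minv(G)` has weight `1`, and `0` otherwise. -/
noncomputable def eps0 (G : LongEdgeGraph) : ℕ :=
  if ∀ e ∈ G.edges, (e.1 = G.minv ∨ e.2.1 = G.minv) → e.2.2 = 1 then 1 else 0

/-- `ε_1(G)`: `1` if every edge incident to `maxv(G)` has weight `1`, and `0` otherwise. -/
noncomputable def eps1 (G : LongEdgeGraph) : ℕ :=
  if ∀ e ∈ G.edges, (e.1 = G.maxv ∨ e.2.1 = G.maxv) → e.2.2 = 1 then 1 else 0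

/-- A template: `minv(Γ) = 0` and every vertex `i` with `1 ≤ i ≤ ℓ(Γ) − 1` is strictly
covered by some edge from `j` to `k` with `j < i < k`. -/
def IsTemplate (G : LongEdgeGraph) : Prop :=
  G.minv = 0 ∧ ∀ i, 1 ≤ i → i + 1 ≤ G.lengthG → ∃ e ∈ G.edges, e.1 < i ∧ i < e.2.1

/-- The shift `G_{(k)}` of a long-edge graph: every edge is moved `k` units to the right. -/
def shiftG (G : LongEdgeGraph) (k : ℕ) : LongEdgeGraph where
  edges := G.edges.map fun e => (e.1 + k, e.2.1 + k, e.2.2)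
  valid := by
    intro e he
    rw [Multiset.mem_map] at he
    obtain ⟨a, ha, rfl⟩ := he
    obtain ⟨h1, h2, h3⟩ := G.valid a ha
    dsimp only
    refine ⟨by omega, h2, ?_⟩
    rintro ⟨hc1, hc2⟩
    exact h3 ⟨by omega, hc2⟩

end LongEdgeGraph

open LongEdgeGraph

/-- `G` is `β`-allowable: `maxv(G) ≤ M+1` and `β_{j−1} ≥ λ_j(G)` for each `j`. -/
def Allowable (M : ℕ) (β : ℕ → ℕ) (G : LongEdgeGraph) : Prop :=
  G.maxv ≤ M + 1 ∧ ∀ j, 1 ≤ j → j ≤ M + 1 → G.lam j ≤ β (j - 1)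

/-- `G` is `β`-semiallowable: `maxv(G) ≤ M+1` and `β_{j−1} ≥ λ̄_j(G)` for each `j`. -/
def Semiallowable (M : ℕ) (β : ℕ → ℕ) (G : LongEdgeGraph) : Prop :=
  G.maxv ≤ M + 1 ∧ ∀ j, 1 ≤ j → j ≤ M + 1 → G.lambar j ≤ β (j - 1)

/-- The edge multiset of `ext_β(G)`: the weighted edges of `G` together with
`β_{j−1} − λ_j(G)` unweighted edges (encoded with weight `0`) connecting `j−1` and `j`
for each `1 ≤ j ≤ M+1`. -/
def extEdges (M : ℕ) (β : ℕ → ℕ) (G : LongEdgeGraph) : Multiset (ℕ × ℕ × ℕ) :=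
  G.edges + ∑ j ∈ Finset.range (M + 1), Multiset.replicate (β j - G.lam (j + 1)) (j, j + 1, 0)

/-- `P_β(G)`: the number of `β`-extended orderings of `G` up to equivalence (and `0` if `G`
is not `β`-allowable).  An equivalence class of total orderings of the vertices and edges of
`ext_β(G)` (extending the natural order of the vertices, with every edge placed between its
endpoints, and with edges having the same endpoints and the same weight — or both unweighted —
indistinguishable) is encoded by the list of edges placed in each of the `M+1` gaps between
consecutive vertices `j` and `j+1`, `0 ≤ j ≤ M`. -/
noncomputable def Pbeta (M : ℕ) (β : ℕ → ℕ) (G : LongEdgeGraph) : ℕ :=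
  if Allowable M β G then
    Nat.card {L : Fin (M + 1) → List (ℕ × ℕ × ℕ) //
      (∑ j : Fin (M + 1), (↑(L j) : Multiset (ℕ × ℕ × ℕ))) = extEdges M β G ∧
      ∀ j : Fin (M + 1), ∀ e ∈ L j, e.1 ≤ (j : ℕ) ∧ (j : ℕ) + 1 ≤ e.2.1}
  else 0

/-- `(G_1, …, G_i)` is a partition of `G`: each `G_j` is nonempty and the disjoint union of
their weighted edge multisets is the weighted edge multiset of `G`. -/
def IsPartitionList (G : LongEdgeGraph) (Gs : List LongEdgeGraph) : Prop :=
  (∀ H ∈ Gs, H.edges ≠ 0) ∧ (Gs.map LongEdgeGraph.edges).sum = G.edges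

/-- `Φ_β(G) = ∑_{i ≥ 1} ((−1)^{i+1}/i) ∑_{(G_1,…,G_i)} ∏_j P_β(G_j)`, the sum over all
partitions of `G`. -/
noncomputable def Phi (M : ℕ) (β : ℕ → ℕ) (G : LongEdgeGraph) : ℚ :=
  ∑ᶠ Gs ∈ {Gs : List LongEdgeGraph | IsPartitionList G Gs},
    ((-1 : ℚ) ^ (Gs.length + 1) / (Gs.length : ℚ)) *
      (Gs.map fun H => (Pbeta M β H : ℚ)).prod

namespace LEGAux

open LongEdgeGraph

theorem leg_ext {G H : LongEdgeGraph} (h : G.edges = H.edges) : G = H := by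
  cases G; cases H; simp_all

/-- reflection of an edge about `N`. -/
def reflE (N : ℕ) (e : ℕ × ℕ × ℕ) : ℕ × ℕ × ℕ := (N - e.2.1, N - e.1, e.2.2)

@[simp] theorem reflE_w (N : ℕ) (e : ℕ × ℕ × ℕ) : (reflE N e).2.2 = e.2.2 := rfl

def Bdd (N : ℕ) (G : LongEdgeGraph) : Prop := ∀ e ∈ G.edges, e.2.1 ≤ N

theorem reflE_reflE (N : ℕ) (e : ℕ × ℕ × ℕ) (h1 : e.1 < e.2.1) (h2 : e.2.1 ≤ N) :
    reflE N (reflE N e) = e := by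
  obtain ⟨a, b, c⟩ := e
  simp only [reflE] at *
  refine Prod.ext ?_ (Prod.ext ?_ rfl) <;> simp <;> omega

def reflG (N : ℕ) (G : LongEdgeGraph) : LongEdgeGraph where
  edges := (G.edges.filter fun e => e.2.1 ≤ N).map (reflE N)
  valid := by
    intro e he
    rw [Multiset.mem_map] at he
    obtain ⟨a, ha, rfl⟩ := he
    rw [Multiset.mem_filter] at ha
    obtain ⟨ha, hb⟩ := ha
    obtain ⟨h1, h2, h3⟩ := G.valid a ha
    simp only [reflE]
    refine ⟨by omega, h2, ?_⟩
    rintro ⟨hc1, hc2⟩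
    exact h3 ⟨by omega, hc2⟩

theorem reflG_edges {N : ℕ} {G : LongEdgeGraph} (h : Bdd N G) :
    (reflG N G).edges = G.edges.map (reflE N) := by
  unfold reflG
  simp only
  rw [Multiset.filter_eq_self.2 h]

theorem bdd_reflG (N : ℕ) (G : LongEdgeGraph) : Bdd N (reflG N G) := by
  intro e he
  rw [reflG, Multiset.mem_map] at he
  obtain ⟨a, ha, rfl⟩ := he
  simp [reflE]

theorem reflG_reflG {N : ℕ} {G : LongEdgeGraph} (h : Bdd N G) : reflG N (reflG N G) = G := by
  apply leg_ext
  rw [reflG_edges (bdd_reflG N G), reflG_edges h, Multiset.map_map]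
  conv_rhs => rw [← Multiset.map_id G.edges]
  apply Multiset.map_congr rfl
  intro e he
  simp only [Function.comp_apply, id]
  exact reflE_reflE N e (G.valid e he).1 (h e he)

theorem lam_reflG {N : ℕ} {G : LongEdgeGraph} (h : Bdd N G) (j : ℕ) :
    (reflG N G).lam j = G.lam (N + 1 - j) := by
  unfold LongEdgeGraph.lam
  rw [reflG_edges h, Multiset.filter_map, Multiset.map_map]
  congr 1
  apply Multiset.map_congr
  · apply Multiset.filter_congr
    intro e he
    obtain ⟨h1, -, -⟩ := G.valid e he
    have h2 := h e he
    simp only [Function.comp_apply, reflE]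
    constructor <;> (rintro ⟨a, b⟩; exact ⟨by omega, by omega⟩)
  · intro e _; rfl

theorem maxv_le {N : ℕ} {G : LongEdgeGraph} (h : Bdd N G) : G.maxv ≤ N := by
  unfold LongEdgeGraph.maxv
  rcases Set.eq_empty_or_nonempty G.verts with he | hne
  · rw [he, csSup_empty]; exact Nat.zero_le N
  · apply csSup_le hne
    rintro v ⟨e, he, hv | hv⟩
    · have := (G.valid e he).1; have := h e he; omega
    · have := h e he; omega

theorem le_maxv {G : LongEdgeGraph} {v : ℕ} (hv : v ∈ G.verts) : v ≤ G.maxv := by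
  apply le_csSup
  · refine ⟨(G.edges.map fun e => e.2.1).sum, ?_⟩
    rintro w ⟨e, he, hw | hw⟩
    · have h1 := (G.valid e he).1
      have : e.2.1 ≤ (G.edges.map fun e => e.2.1).sum :=
        Multiset.single_le_sum (fun x _ => Nat.zero_le x) _
          (Multiset.mem_map_of_mem _ he)
      omega
    · subst hw
      exact Multiset.single_le_sum (fun x _ => Nat.zero_le x) _
        (Multiset.mem_map_of_mem _ he)
  · exact hv

def Wt (G : LongEdgeGraph) : ℕ := (G.edges.map fun e => e.2.2).sum

theorem msum_le {s t : Multiset ℕ} (h : s ≤ t) : s.sum ≤ t.sum := by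
  obtain ⟨u, rfl⟩ := Multiset.le_iff_exists_add.1 h
  rw [Multiset.sum_add]
  exact Nat.le_add_right _ _

theorem lam_le_Wt (G : LongEdgeGraph) (j : ℕ) : G.lam j ≤ Wt G :=
  msum_le (Multiset.map_le_map (Multiset.filter_le _ _))

theorem lambar_le_lam (G : LongEdgeGraph) (j : ℕ) : G.lambar j ≤ G.lam j := Nat.sub_le _ _

theorem semiallowable_of_Wt {M : ℕ} {β : ℕ → ℕ} {G : LongEdgeGraph}
    (hb : Bdd (M + 1) G) (hw : ∀ j, Wt G ≤ β j) : Semiallowable M β G := by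
  refine ⟨maxv_le hb, fun j _ _ => ?_⟩
  exact le_trans (lambar_le_lam G j) (le_trans (lam_le_Wt G j) (hw _))

theorem Wt_shiftG (G : LongEdgeGraph) (k : ℕ) : Wt (G.shiftG k) = Wt G := by
  unfold Wt LongEdgeGraph.shiftG
  rw [Multiset.map_map]
  rfl

theorem good_extEdges {M : ℕ} {β : ℕ → ℕ} {G : LongEdgeGraph} (hb : Bdd (M + 1) G) :
    ∀ e ∈ extEdges M β G, e.1 < e.2.1 ∧ e.2.1 ≤ M + 1 := by
  intro e he
  rw [extEdges, Multiset.mem_add] at he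
  rcases he with he | he
  · exact ⟨(G.valid e he).1, hb e he⟩
  · rw [Multiset.mem_sum] at he
    obtain ⟨j, hj, he⟩ := he
    rw [Multiset.eq_of_mem_replicate he]
    rw [Finset.mem_range] at hj
    exact ⟨by simp, by simp; omega⟩

theorem allowable_reflG {M : ℕ} {β : ℕ → ℕ} {G : LongEdgeGraph} (hb : Bdd (M + 1) G) :
    Allowable M (fun j => β (M - j)) (reflG (M + 1) G) ↔ Allowable M β G := by
  constructor
  · rintro ⟨h1, h2⟩
    refine ⟨maxv_le hb, fun j hj1 hj2 => ?_⟩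
    have := h2 (M + 2 - j) (by omega) (by omega)
    rw [lam_reflG hb] at this
    simp only at this
    have e1 : M + 1 + 1 - (M + 2 - j) = j := by omega
    have e2 : M - (M + 2 - j - 1) = j - 1 := by omega
    rwa [e1, e2] at this
  · rintro ⟨h1, h2⟩
    refine ⟨maxv_le (bdd_reflG _ _), fun j hj1 hj2 => ?_⟩
    rw [lam_reflG hb]
    simp only
    have e1 : M + 1 + 1 - j = M + 2 - j := by omega
    have e2 : M - (j - 1) = M + 2 - j - 1 := by omega
    rw [e1, e2]
    exact h2 (M + 2 - j) (by omega) (by omega)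

theorem extEdges_reflG {M : ℕ} {β : ℕ → ℕ} {G : LongEdgeGraph} (hb : Bdd (M + 1) G) :
    extEdges M (fun j => β (M - j)) (reflG (M + 1) G) = (extEdges M β G).map (reflE (M + 1)) := by
  unfold extEdges
  rw [Multiset.map_add, reflG_edges hb]
  congr 1
  rw [show Multiset.map (reflE (M + 1)) = ⇑(Multiset.mapAddMonoidHom (reflE (M + 1))) from
    (Multiset.coe_mapAddMonoidHom _).symm, map_sum]
  simp only [Multiset.mapAddMonoidHom, AddMonoidHom.coe_mk, ZeroHom.coe_mk,
    Multiset.map_replicate]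
  have step1 : ∀ j ∈ Finset.range (M + 1),
      Multiset.replicate (β j - G.lam (j + 1)) (reflE (M + 1) (j, j + 1, 0)) =
      Multiset.replicate (β j - G.lam (j + 1)) ((M - j, M - j + 1, 0) : ℕ × ℕ × ℕ) := by
    intro j hj
    rw [Finset.mem_range] at hj
    congr 1
    simp only [reflE]
    rw [show M + 1 - (j + 1) = M - j from by omega,
      show M + 1 - j = (M - j) + 1 from by omega]
  rw [Finset.sum_congr rfl step1]
  rw [← Finset.sum_range_reflect (fun j => Multiset.replicate (β j - G.lam (j + 1))
    ((M - j, M - j + 1, 0) : ℕ × ℕ × ℕ)) (M + 1)]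
  apply Finset.sum_congr rfl
  intro m hm
  rw [Finset.mem_range] at hm
  rw [lam_reflG hb]
  have e1 : M + 1 - 1 - m = M - m := by omega
  have e2 : M + 1 + 1 - (m + 1) = (M - m) + 1 := by omega
  have e3 : M - (M - m) = m := by omega
  rw [e1, e2, e3]

def Pred (M : ℕ) (β : ℕ → ℕ) (G : LongEdgeGraph) (L : Fin (M + 1) → List (ℕ × ℕ × ℕ)) : Prop :=
  (∑ j : Fin (M + 1), (↑(L j) : Multiset (ℕ × ℕ × ℕ))) = extEdges M β G ∧
    ∀ j : Fin (M + 1), ∀ e ∈ L j, e.1 ≤ (j : ℕ) ∧ (j : ℕ) + 1 ≤ e.2.1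

def revL (M : ℕ) (L : Fin (M + 1) → List (ℕ × ℕ × ℕ)) : Fin (M + 1) → List (ℕ × ℕ × ℕ) :=
  fun j => ((L j.rev).map (reflE (M + 1))).reverse

theorem sum_revL (M : ℕ) (L : Fin (M + 1) → List (ℕ × ℕ × ℕ)) :
    (∑ j : Fin (M + 1), (↑(revL M L j) : Multiset (ℕ × ℕ × ℕ)))
      = (∑ j : Fin (M + 1), (↑(L j) : Multiset (ℕ × ℕ × ℕ))).map (reflE (M + 1)) := by
  rw [show Multiset.map (reflE (M + 1)) = ⇑(Multiset.mapAddMonoidHom (reflE (M + 1))) from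
    (Multiset.coe_mapAddMonoidHom _).symm, map_sum]
  rw [← Equiv.sum_comp (Fin.revPerm) (fun j => (Multiset.mapAddMonoidHom (reflE (M + 1))) ↑(L j))]
  apply Finset.sum_congr rfl
  intro j _
  simp only [revL, Multiset.coe_reverse, Fin.revPerm_apply]
  rw [← Multiset.map_coe, Multiset.coe_mapAddMonoidHom]

theorem mem_sum_of_mem {M : ℕ} (L : Fin (M + 1) → List (ℕ × ℕ × ℕ)) (j : Fin (M + 1))
    {e : ℕ × ℕ × ℕ} (he : e ∈ L j) :
    e ∈ ∑ j : Fin (M + 1), (↑(L j) : Multiset (ℕ × ℕ × ℕ)) :=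
  Multiset.mem_sum.2 ⟨j, Finset.mem_univ j, by exact_mod_cast he⟩

theorem good_of_pred {M : ℕ} {β : ℕ → ℕ} {G : LongEdgeGraph} (hb : Bdd (M + 1) G)
    {L : Fin (M + 1) → List (ℕ × ℕ × ℕ)} (h : Pred M β G L) :
    ∀ j : Fin (M + 1), ∀ e ∈ L j, e.1 < e.2.1 ∧ e.2.1 ≤ M + 1 := by
  intro j e he
  exact good_extEdges hb e (h.1 ▸ mem_sum_of_mem L j he)

theorem pred_revL {M : ℕ} {β : ℕ → ℕ} {G : LongEdgeGraph} (hb : Bdd (M + 1) G)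
    {L : Fin (M + 1) → List (ℕ × ℕ × ℕ)} (h : Pred M β G L) :
    Pred M (fun j => β (M - j)) (reflG (M + 1) G) (revL M L) := by
  constructor
  · rw [sum_revL, h.1, extEdges_reflG hb]
  · intro j e he
    simp only [revL, List.mem_reverse, List.mem_map] at he
    obtain ⟨a, ha, rfl⟩ := he
    have h1 := h.2 j.rev a ha
    have h2 := good_of_pred hb h j.rev a ha
    rw [Fin.val_rev] at h1
    have hj : (j : ℕ) < M + 1 := j.2
    simp only [reflE]
    omega

theorem revL_revL {M : ℕ} {L : Fin (M + 1) → List (ℕ × ℕ × ℕ)}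
    (hgood : ∀ j : Fin (M + 1), ∀ e ∈ L j, e.1 < e.2.1 ∧ e.2.1 ≤ M + 1) :
    revL M (revL M L) = L := by
  funext j
  simp only [revL, Fin.rev_rev, List.map_reverse, List.reverse_reverse, List.map_map]
  conv_rhs => rw [← List.map_id (L j)]
  apply List.map_congr_left
  intro e he
  obtain ⟨h1, h2⟩ := hgood j e he
  exact reflE_reflE (M + 1) e h1 h2

theorem extEdges_congr {M : ℕ} {β β' : ℕ → ℕ} (G : LongEdgeGraph)
    (h : ∀ j ≤ M, β j = β' j) : extEdges M β G = extEdges M β' G := by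
  unfold extEdges
  congr 1
  apply Finset.sum_congr rfl
  intro j hj
  rw [Finset.mem_range] at hj
  rw [h j (by omega)]

theorem pred_congr {M : ℕ} {β β' : ℕ → ℕ} {G G' : LongEdgeGraph}
    (h : extEdges M β G = extEdges M β' G') (L : Fin (M + 1) → List (ℕ × ℕ × ℕ)) :
    Pred M β G L ↔ Pred M β' G' L := by
  unfold Pred; rw [h]

theorem allowable_congr {M : ℕ} {β β' : ℕ → ℕ} {G : LongEdgeGraph}
    (h : ∀ j ≤ M, β j = β' j) : Allowable M β G ↔ Allowable M β' G := by
  unfold Allowable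
  refine and_congr Iff.rfl (forall_congr' fun j => ?_)
  constructor
  · intro hh h1 h2; have := hh h1 h2; rwa [h (j - 1) (by omega)] at this
  · intro hh h1 h2; have := hh h1 h2; rwa [← h (j - 1) (by omega)] at this

theorem Pbeta_reflG {M : ℕ} {β : ℕ → ℕ} {G : LongEdgeGraph} (hb : Bdd (M + 1) G) :
    Pbeta M (fun j => β (M - j)) (reflG (M + 1) G) = Pbeta M β G := by
  unfold Pbeta
  by_cases hA : Allowable M β G
  · rw [if_pos ((allowable_reflG hb).2 hA), if_pos hA]
    apply Nat.card_congr
    have hcongr : ∀ L, Pred M (fun j => β (M - (M - j))) (reflG (M + 1) (reflG (M + 1) G)) L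
        ↔ Pred M β G L := by
      intro L
      rw [reflG_reflG hb]
      exact pred_congr (extEdges_congr G (fun j hj => by rw [Nat.sub_sub_self hj])) L
    exact {
      toFun := fun L => ⟨revL M L.1,
        (hcongr _).1 (pred_revL (bdd_reflG (M + 1) G) (L.2 : Pred M _ _ L.1))⟩
      invFun := fun L => ⟨revL M L.1, pred_revL hb (L.2 : Pred M β G L.1)⟩
      left_inv := by
        intro L
        apply Subtype.ext
        exact revL_revL (good_of_pred (bdd_reflG (M + 1) G) (L.2 : Pred M _ _ L.1))
      right_inv := by
        intro L
        apply Subtype.ext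
        exact revL_revL (good_of_pred hb (L.2 : Pred M β G L.1)) }
  · rw [if_neg hA, if_neg (fun h => hA ((allowable_reflG hb).1 h))]

theorem le_list_sum {α : Type*} {l : List (Multiset α)} {a : Multiset α} (h : a ∈ l) :
    a ≤ l.sum := by
  induction l with
  | nil => simp at h
  | cons b t ih =>
    rw [List.sum_cons]
    rcases List.mem_cons.1 h with h | h
    · subst h; exact Multiset.le_add_right _ _
    · exact le_trans (ih h) (Multiset.le_add_left _ _)

theorem bdd_part {N : ℕ} {G : LongEdgeGraph} {Gs : List LongEdgeGraph} (hb : Bdd N G)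
    (hp : IsPartitionList G Gs) {H : LongEdgeGraph} (hH : H ∈ Gs) : Bdd N H := by
  intro e he
  apply hb
  have h1 : H.edges ≤ (Gs.map LongEdgeGraph.edges).sum :=
    le_list_sum (List.mem_map_of_mem hH)
  rw [hp.2] at h1
  exact Multiset.mem_of_le h1 he

theorem isPartition_reflG {N : ℕ} {G : LongEdgeGraph} {Gs : List LongEdgeGraph}
    (hb : Bdd N G) (hp : IsPartitionList G Gs) :
    IsPartitionList (reflG N G) (Gs.map (reflG N)) := by
  constructor
  · intro H hH
    rw [List.mem_map] at hH
    obtain ⟨K, hK, rfl⟩ := hH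
    rw [reflG_edges (bdd_part hb hp hK)]
    intro h0
    apply hp.1 K hK
    have := congrArg Multiset.card h0
    rw [Multiset.card_map] at this
    exact Multiset.card_eq_zero.1 (by simpa using this)
  · rw [List.map_map, reflG_edges hb]
    have h1 : Gs.map (LongEdgeGraph.edges ∘ reflG N)
        = (Gs.map LongEdgeGraph.edges).map (Multiset.map (reflE N)) := by
      rw [List.map_map]
      apply List.map_congr_left
      intro K hK
      exact reflG_edges (bdd_part hb hp hK)
    rw [h1]
    rw [show Multiset.map (reflE N) = ⇑(Multiset.mapAddMonoidHom (reflE N)) from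
      (Multiset.coe_mapAddMonoidHom _).symm]
    rw [← map_list_sum (Multiset.mapAddMonoidHom (reflE N)), hp.2]

theorem map_reflG_reflG {N : ℕ} {G : LongEdgeGraph} {Gs : List LongEdgeGraph}
    (hb : Bdd N G) (hp : IsPartitionList G Gs) :
    (Gs.map (reflG N)).map (reflG N) = Gs := by
  rw [List.map_map]
  conv_rhs => rw [← List.map_id Gs]
  apply List.map_congr_left
  intro K hK
  exact reflG_reflG (bdd_part hb hp hK)

theorem Phi_reflG {M : ℕ} {β : ℕ → ℕ} {G : LongEdgeGraph} (hb : Bdd (M + 1) G) :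
    Phi M (fun j => β (M - j)) (reflG (M + 1) G) = Phi M β G := by
  unfold Phi
  symm
  apply finsum_mem_eq_of_bijOn (List.map (reflG (M + 1)))
  · refine ⟨fun Gs hp => isPartition_reflG hb hp, fun Gs1 h1 Gs2 h2 he => ?_, fun Hs hp => ?_⟩
    · have := congrArg (List.map (reflG (M + 1))) he
      rwa [map_reflG_reflG hb h1, map_reflG_reflG hb h2] at this
    · refine ⟨Hs.map (reflG (M + 1)), ?_, map_reflG_reflG (bdd_reflG (M + 1) G) hp⟩
      have h2 := isPartition_reflG (bdd_reflG (M + 1) G) hp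
      rwa [reflG_reflG hb] at h2
  · intro Gs hp
    rw [List.length_map, List.map_map]
    refine congrArg (fun t => ((-1 : ℚ) ^ (Gs.length + 1) / (Gs.length : ℚ)) * t)
      (congrArg List.prod (List.map_congr_left fun K hK => ?_))
    simp only [Function.comp_apply]
    rw [Pbeta_reflG (bdd_part hb hp hK)]

end LEGAux

open LEGAux

theorem conjugate_coefficients' (Γ Γbar : LongEdgeGraph) (ℓ : ℕ)
    (hΓ : Γ.IsTemplate) (hlen : Γ.lengthG = ℓ)
    (hconj : Γbar.edges = Γ.edges.map (fun e => (ℓ - e.2.1, ℓ - e.1, e.2.2)))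
    (η ηbar : ℕ → ℚ)
    (hphi : ∀ (M : ℕ) (β : ℕ → ℕ) (k : ℕ), k + ℓ ≤ M + 1 →
      Semiallowable M β (Γ.shiftG k) →
      Phi M β (Γ.shiftG k) = η 0 + ∑ j ∈ Finset.range ℓ, η (j + 1) * (β (k + j) : ℚ))
    (hphibar : ∀ (M : ℕ) (β : ℕ → ℕ) (k : ℕ), k + ℓ ≤ M + 1 →
      Semiallowable M β (Γbar.shiftG k) →
      Phi M β (Γbar.shiftG k) = ηbar 0 + ∑ j ∈ Finset.range ℓ, ηbar (j + 1) * (β (k + j) : ℚ)) :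
    ηbar 0 = η 0 ∧ (∀ i, 1 ≤ i → i ≤ ℓ → ηbar i = η (ℓ + 1 - i)) := by
  set M := ℓ - 1 with hMdef
  have hMℓ : ℓ ≤ M + 1 := by omega
  have hΓmax : Γ.maxv = ℓ := by
    have h1 := hΓ.1
    unfold LongEdgeGraph.lengthG at hlen
    omega
  have hbddΓ : Bdd ℓ Γ := by
    intro e he
    rw [← hΓmax]
    exact le_maxv ⟨e, he, Or.inr rfl⟩
  have hb0 : Bdd (M + 1) (Γ.shiftG 0) := by
    intro e he
    rw [LongEdgeGraph.shiftG] at he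
    simp only [Multiset.mem_map] at he
    obtain ⟨a, ha, rfl⟩ := he
    have := hbddΓ a ha
    simp only
    omega
  have hrefl : reflG (M + 1) (Γ.shiftG 0) = Γbar.shiftG (M + 1 - ℓ) := by
    apply leg_ext
    rw [reflG_edges hb0]
    show ((Γ.shiftG 0).edges).map (reflE (M + 1)) = (Γbar.shiftG (M + 1 - ℓ)).edges
    rw [LongEdgeGraph.shiftG, LongEdgeGraph.shiftG]
    simp only
    rw [hconj, Multiset.map_map, Multiset.map_map]
    apply Multiset.map_congr rfl
    intro e he
    have h1 := (Γ.valid e he).1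
    have h2 := hbddΓ e he
    simp only [Function.comp_apply, reflE, Prod.mk.injEq]
    exact ⟨by omega, by omega, trivial⟩
  have hb1 : Bdd (M + 1) (Γbar.shiftG (M + 1 - ℓ)) := hrefl ▸ bdd_reflG (M + 1) (Γ.shiftG 0)
  set W := Wt Γ with hWdef
  have hWbar : Wt (Γbar.shiftG (M + 1 - ℓ)) = W := by
    rw [Wt_shiftG, hWdef]
    unfold Wt
    rw [hconj, Multiset.map_map]
    rfl
  -- key identity
  have key : ∀ b : ℕ → ℕ,
      η 0 + ∑ j ∈ Finset.range ℓ, η (j + 1) * ((W + b j : ℕ) : ℚ)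
        = ηbar 0 + ∑ j ∈ Finset.range ℓ, ηbar (j + 1) * ((W + b (ℓ - 1 - j) : ℕ) : ℚ) := by
    intro b
    set β : ℕ → ℕ := fun j => W + b j with hβ
    have hsemi1 : Semiallowable M β (Γ.shiftG 0) :=
      semiallowable_of_Wt hb0 (fun j => by rw [Wt_shiftG]; exact Nat.le_add_right _ _)
    have hsemi2 : Semiallowable M (fun j => β (M - j)) (Γbar.shiftG (M + 1 - ℓ)) :=
      semiallowable_of_Wt hb1 (fun j => by rw [hWbar]; exact Nat.le_add_right _ _)
    have h1 := hphi M β 0 (by omega) hsemi1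
    have h2 := hphibar M (fun j => β (M - j)) (M + 1 - ℓ) (by omega) hsemi2
    have h3 := Phi_reflG (β := β) hb0
    rw [hrefl] at h3
    rw [h3] at h2
    rw [h1] at h2
    calc η 0 + ∑ j ∈ Finset.range ℓ, η (j + 1) * ((W + b j : ℕ) : ℚ)
        = η 0 + ∑ j ∈ Finset.range ℓ, η (j + 1) * ((β (0 + j) : ℕ) : ℚ) := by
          congr 1
          exact Finset.sum_congr rfl fun j _ => by simp [hβ]
      _ = ηbar 0 + ∑ j ∈ Finset.range ℓ,
            ηbar (j + 1) * ((((fun j => β (M - j)) (M + 1 - ℓ + j)) : ℕ) : ℚ) := h2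
      _ = ηbar 0 + ∑ j ∈ Finset.range ℓ, ηbar (j + 1) * ((W + b (ℓ - 1 - j) : ℕ) : ℚ) := by
          congr 1
          refine Finset.sum_congr rfl fun j hj => ?_
          rw [Finset.mem_range] at hj
          have e1 : M - (M + 1 - ℓ + j) = ℓ - 1 - j := by omega
          simp only [hβ, e1]
  -- linearized key
  have key' : ∀ b : ℕ → ℕ,
      η 0 + (∑ j ∈ Finset.range ℓ, η (j + 1) * (W : ℚ))
          + ∑ j ∈ Finset.range ℓ, η (j + 1) * (b j : ℚ)
        = ηbar 0 + (∑ j ∈ Finset.range ℓ, ηbar (j + 1) * (W : ℚ))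
          + ∑ j ∈ Finset.range ℓ, ηbar (j + 1) * (b (ℓ - 1 - j) : ℚ) := by
    intro b
    have h := key b
    push_cast at h
    simp only [mul_add, Finset.sum_add_distrib] at h
    linarith [h]
  have E0 := key' (fun _ => 0)
  simp only [Nat.cast_zero, mul_zero, Finset.sum_const_zero, add_zero] at E0
  -- coefficient extraction
  have hcoef : ∀ i, i < ℓ → η (i + 1) = ηbar (ℓ - i) := by
    intro i hi
    have Ei := key' (fun j => if j = i then 1 else 0)
    have lhs1 : (∑ j ∈ Finset.range ℓ, η (j + 1) * (((if j = i then 1 else 0 : ℕ)) : ℚ))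
        = η (i + 1) := by
      rw [Finset.sum_congr rfl (fun j _ => by
        rw [show (((if j = i then 1 else 0 : ℕ)) : ℚ) = if j = i then (1 : ℚ) else 0 from by
          split <;> simp, mul_ite, mul_one, mul_zero])]
      rw [Finset.sum_ite_eq' (Finset.range ℓ) i (fun j => η (j + 1))]
      rw [if_pos (Finset.mem_range.2 hi)]
    have lhs2 : (∑ j ∈ Finset.range ℓ,
          ηbar (j + 1) * (((if ℓ - 1 - j = i then 1 else 0 : ℕ)) : ℚ))
        = ηbar (ℓ - i) := by
      have hc : ∀ j ∈ Finset.range ℓ,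
          ηbar (j + 1) * (((if ℓ - 1 - j = i then 1 else 0 : ℕ)) : ℚ)
            = if j = ℓ - 1 - i then ηbar (j + 1) else 0 := by
        intro j hj
        rw [Finset.mem_range] at hj
        by_cases h : j = ℓ - 1 - i
        · rw [if_pos (by omega), if_pos h]; simp
        · rw [if_neg (by omega), if_neg h]; simp
      rw [Finset.sum_congr rfl hc]
      rw [Finset.sum_ite_eq' (Finset.range ℓ) (ℓ - 1 - i) (fun j => ηbar (j + 1))]
      rw [if_pos (Finset.mem_range.2 (by omega))]
      congr 1
      omega
    rw [lhs1, lhs2] at Ei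
    linarith [Ei, E0]
  have conc2 : ∀ i, 1 ≤ i → i ≤ ℓ → ηbar i = η (ℓ + 1 - i) := by
    intro i h1 h2
    have := hcoef (ℓ - i) (by omega)
    have e1 : ℓ - (ℓ - i) = i := by omega
    have e2 : ℓ - i + 1 = ℓ + 1 - i := by omega
    rw [e1, e2] at this
    exact this.symm
  refine ⟨?_, conc2⟩
  -- sums equal
  have hS : (∑ j ∈ Finset.range ℓ, η (j + 1)) = ∑ j ∈ Finset.range ℓ, ηbar (j + 1) := by
    rw [← Finset.sum_range_reflect (fun j => ηbar (j + 1)) ℓ]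
    apply Finset.sum_congr rfl
    intro j hj
    rw [Finset.mem_range] at hj
    rw [hcoef j hj]
    congr 1
    omega
  have hS' : (∑ j ∈ Finset.range ℓ, η (j + 1) * (W : ℚ))
      = ∑ j ∈ Finset.range ℓ, ηbar (j + 1) * (W : ℚ) := by
    rw [← Finset.sum_mul, ← Finset.sum_mul, hS]
  linarith [E0, hS']


theorem Icc_sum_eq {f : ℕ → ℚ} {ℓ : ℕ} :
    (∑ j ∈ Finset.Icc 1 ℓ, f j) = ∑ i ∈ Finset.range ℓ, f (i + 1) := by
  rw [← Finset.Ico_add_one_right_eq_Icc, Finset.sum_Ico_eq_sum_range]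
  rw [show ℓ + 1 - 1 = ℓ from by omega]
  exact Finset.sum_congr rfl fun i _ => by rw [Nat.add_comm]

/-- suppose `Γ` is a template of length `ℓ` with conjugate `Γ̄` (the image of
`Γ` under `n ↦ ℓ − n`), and suppose the affine functions with rational coefficients
`φ(x_0,…,x_{ℓ−1}) = η_0 + ∑_{j=0}^{ℓ−1} η_{j+1} x_j` and
`φ̄(x_0,…,x_{ℓ−1}) = η̄_0 + ∑_{j=0}^{ℓ−1} η̄_{j+1} x_j` compute `Φ_β` on all
`β`-semiallowable shifts `Γ_{(k)}`, resp. `Γ̄_{(k)}`, with `k + ℓ ≤ M + 1`.  Then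
`η̄_0 = η_0` and `η̄_i = η_{ℓ+1−i}` for `i = 1, …, ℓ`; consequently, with
`ζ^i = ∑_{j=1}^{ℓ} C(j−1, i) η_j` and `ζ̄^i = ∑_{j=1}^{ℓ} C(j−1, i) η̄_j`, one has
`ζ̄^0 = ζ^0` and `ζ^1 + ζ̄^1 = (ℓ−1) ζ^0`. -/
theorem conjugate_coefficients (Γ Γbar : LongEdgeGraph) (ℓ : ℕ)
    (hΓ : Γ.IsTemplate) (hlen : Γ.lengthG = ℓ)
    (hconj : Γbar.edges = Γ.edges.map (fun e => (ℓ - e.2.1, ℓ - e.1, e.2.2)))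
    (η ηbar : ℕ → ℚ)
    (hphi : ∀ (M : ℕ) (β : ℕ → ℕ) (k : ℕ), k + ℓ ≤ M + 1 →
      Semiallowable M β (Γ.shiftG k) →
      Phi M β (Γ.shiftG k) = η 0 + ∑ j ∈ Finset.range ℓ, η (j + 1) * (β (k + j) : ℚ))
    (hphibar : ∀ (M : ℕ) (β : ℕ → ℕ) (k : ℕ), k + ℓ ≤ M + 1 →
      Semiallowable M β (Γbar.shiftG k) →
      Phi M β (Γbar.shiftG k) = ηbar 0 + ∑ j ∈ Finset.range ℓ, ηbar (j + 1) * (β (k + j) : ℚ)) :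
    ηbar 0 = η 0 ∧
    (∀ i, 1 ≤ i → i ≤ ℓ → ηbar i = η (ℓ + 1 - i)) ∧
    (∑ j ∈ Finset.Icc 1 ℓ, ((j - 1).choose 0 : ℚ) * ηbar j)
      = (∑ j ∈ Finset.Icc 1 ℓ, ((j - 1).choose 0 : ℚ) * η j) ∧
    (∑ j ∈ Finset.Icc 1 ℓ, ((j - 1).choose 1 : ℚ) * η j)
        + (∑ j ∈ Finset.Icc 1 ℓ, ((j - 1).choose 1 : ℚ) * ηbar j)
      = ((ℓ : ℚ) - 1) * (∑ j ∈ Finset.Icc 1 ℓ, ((j - 1).choose 0 : ℚ) * η j) := by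
  obtain ⟨conc1, conc2⟩ :=
    conjugate_coefficients' Γ Γbar ℓ hΓ hlen hconj η ηbar hphi hphibar
  have h0 : ∀ f : ℕ → ℚ, (∑ j ∈ Finset.Icc 1 ℓ, ((j - 1).choose 0 : ℚ) * f j)
      = ∑ i ∈ Finset.range ℓ, f (i + 1) := by
    intro f
    rw [Icc_sum_eq (f := fun j => ((j - 1).choose 0 : ℚ) * f j)]
    exact Finset.sum_congr rfl fun i _ => by simp
  have h1 : ∀ f : ℕ → ℚ, (∑ j ∈ Finset.Icc 1 ℓ, ((j - 1).choose 1 : ℚ) * f j)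
      = ∑ i ∈ Finset.range ℓ, (i : ℚ) * f (i + 1) := by
    intro f
    rw [Icc_sum_eq (f := fun j => ((j - 1).choose 1 : ℚ) * f j)]
    refine Finset.sum_congr rfl fun i _ => ?_
    simp [Nat.choose_one_right]
  have hS : (∑ i ∈ Finset.range ℓ, ηbar (i + 1)) = ∑ i ∈ Finset.range ℓ, η (i + 1) := by
    have step1 : (∑ i ∈ Finset.range ℓ, ηbar (i + 1))
        = ∑ i ∈ Finset.range ℓ, η (ℓ - i) := by
      refine Finset.sum_congr rfl fun i hi => ?_
      rw [Finset.mem_range] at hi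
      rw [conc2 (i + 1) (by omega) (by omega), show ℓ + 1 - (i + 1) = ℓ - i from by omega]
    rw [step1, ← Finset.sum_range_reflect (fun i => η (i + 1)) ℓ]
    refine Finset.sum_congr rfl fun i hi => ?_
    rw [Finset.mem_range] at hi
    rw [show ℓ - 1 - i + 1 = ℓ - i from by omega]
  have hrefl4 : (∑ i ∈ Finset.range ℓ, (i : ℚ) * ηbar (i + 1))
      = ∑ i ∈ Finset.range ℓ, ((ℓ : ℚ) - 1 - (i : ℚ)) * η (i + 1) := by
    have step1 : (∑ i ∈ Finset.range ℓ, (i : ℚ) * ηbar (i + 1))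
        = ∑ i ∈ Finset.range ℓ, (i : ℚ) * η (ℓ - i) := by
      refine Finset.sum_congr rfl fun i hi => ?_
      rw [Finset.mem_range] at hi
      rw [conc2 (i + 1) (by omega) (by omega), show ℓ + 1 - (i + 1) = ℓ - i from by omega]
    rw [step1, ← Finset.sum_range_reflect (fun i => (i : ℚ) * η (ℓ - i)) ℓ]
    refine Finset.sum_congr rfl fun i hi => ?_
    rw [Finset.mem_range] at hi
    rw [show ℓ - (ℓ - 1 - i) = i + 1 from by omega]
    congr 1
    rw [show ((ℓ - 1 - i : ℕ) : ℚ) = ((ℓ - 1 - i : ℕ) : ℚ) from rfl]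
    rw [Nat.cast_sub (by omega : i ≤ ℓ - 1), Nat.cast_sub (by omega : 1 ≤ ℓ), Nat.cast_one]
  refine ⟨conc1, conc2, ?_, ?_⟩
  · rw [h0, h0, hS]
  · rw [h1, h1, h0, hrefl4, ← Finset.sum_add_distrib, Finset.mul_sum]
    exact Finset.sum_congr rfl fun i _ => by ring
end

section
/- Let ℓ ≥ 1 and let η_0, η_1, …, η_ℓ be rational numbers. Set ζ^i = ∑_{j=1}^{ℓ} C(j−1,i) η_j and ζ̄^i = ∑_{j=1}^{ℓ} C(j−1,i) η_{ℓ+1−j} for i = 0,1,2 (binomial coefficients C(j−1,i)). Let M, a, b be integers with 0 ≤ a ≤ b+1 ≤ M−ℓ+2, and let β = (β_0,…,β_M) = β(d) for a sequence d = (d_0,…,d_M) satisfying d_{a+1} = d_{a+2} = ⋯ = d_{a+ℓ−2} = p and d_{b+ℓ−1} = d_{b+ℓ−2} = ⋯ = d_{b+2} = q. Then ∑_{k=a}^{b} (η_0 + ∑_{j=1}^{ℓ} η_j β_{k+j−1}) = η_0(b−a+1) + ζ^0 ∑_{k=a}^{b+ℓ−1} β_k − ζ^1 β_a − ζ̄^1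 β_{b+ℓ−1} − ζ^2 p + ζ̄^2 q. -/
/-- let `ℓ ≥ 1` and `η_0, …, η_ℓ ∈ ℚ`; set `ζ^i = ∑_{j=1}^{ℓ} C(j−1, i) η_j`
and `ζ̄^i = ∑_{j=1}^{ℓ} C(j−1, i) η_{ℓ+1−j}`.  Let `0 ≤ a ≤ b + 1 ≤ M − ℓ + 2` and let
`β = β(d)` (the partial sums of `d`) for a sequence `d` with
`d_{a+1} = ⋯ = d_{a+ℓ−2} = p` and `d_{b+ℓ−1} = ⋯ = d_{b+2} = q`.  Then
`∑_{k=a}^{b} (η_0 + ∑_{j=1}^{ℓ} η_j β_{k+j−1})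
  = η_0 (b−a+1) + ζ^0 ∑_{k=a}^{b+ℓ−1} β_k − ζ^1 β_a − ζ̄^1 β_{b+ℓ−1} − ζ^2 p + ζ̄^2 q`. -/
theorem sum_shifted_affine (ℓ : ℕ) (hℓ : 1 ≤ ℓ) (η : ℕ → ℚ)
    (M a b : ℕ) (hab : a ≤ b + 1) (hbM : b + ℓ ≤ M + 1)
    (d : ℕ → ℚ) (p q : ℚ)
    (hp : ∀ j, a + 1 ≤ j → j + 2 ≤ a + ℓ → d j = p)
    (hq : ∀ j, b + 2 ≤ j → j + 1 ≤ b + ℓ → d j = q)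
    (β : ℕ → ℚ) (hβ : ∀ i, β i = ∑ j ∈ Finset.range (i + 1), d j) :
    ∑ k ∈ Finset.Icc a b, (η 0 + ∑ j ∈ Finset.Icc 1 ℓ, η j * β (k + j - 1))
      = η 0 * ((b : ℚ) - (a : ℚ) + 1)
        + (∑ j ∈ Finset.Icc 1 ℓ, ((j - 1).choose 0 : ℚ) * η j)
            * (∑ k ∈ Finset.Icc a (b + ℓ - 1), β k)
        - (∑ j ∈ Finset.Icc 1 ℓ, ((j - 1).choose 1 : ℚ) * η j) * β a
        - (∑ j ∈ Finset.Icc 1 ℓ, ((j - 1).choose 1 : ℚ) * η (ℓ + 1 - j)) * β (b + ℓ - 1)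
        - (∑ j ∈ Finset.Icc 1 ℓ, ((j - 1).choose 2 : ℚ) * η j) * p
        + (∑ j ∈ Finset.Icc 1 ℓ, ((j - 1).choose 2 : ℚ) * η (ℓ + 1 - j)) * q := by
  classical
  have hstep : ∀ m, β (m + 1) = β m + d (m + 1) := by
    intro m; rw [hβ, hβ, Finset.sum_range_succ]
  have gauss : ∀ n : ℕ, ∑ i ∈ Finset.range n, (i : ℚ) = (n.choose 2 : ℚ) := by
    intro n
    induction n with
    | zero => simp
    | succ n ih =>
      rw [Finset.sum_range_succ, ih, Nat.choose_succ_succ n 1, Nat.choose_one_right]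
      push_cast; ring
  have c2 : ∀ n : ℕ, ((n + 1).choose 2 : ℚ) * 2 = (n + 1) * n := by
    intro n
    induction n with
    | zero => simp
    | succ n ih =>
      rw [Nat.choose_succ_succ (n + 1) 1, Nat.choose_one_right]
      push_cast at ih ⊢; linarith
  have hA : ∀ s, s + 2 ≤ ℓ → β (a + s) = β a + s * p := by
    intro s
    induction s with
    | zero => intro _; simp
    | succ s ih =>
      intro hs
      have h1 : β (a + s) = β a + s * p := ih (by omega)
      have h2 : d (a + s + 1) = p := hp _ (by omega) (by omega)
      have h3 : a + (s + 1) = (a + s) + 1 := by omega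
      rw [h3, hstep, h1, h2]; push_cast; ring
  have hB : ∀ s, s + 2 ≤ ℓ → β (b + 1 + s) = β (b + 1) + s * q := by
    intro s
    induction s with
    | zero => intro _; simp
    | succ s ih =>
      intro hs
      have h1 : β (b + 1 + s) = β (b + 1) + s * q := ih (by omega)
      have h2 : d (b + 1 + s + 1) = q := hq _ (by omega) (by omega)
      have h3 : b + 1 + (s + 1) = (b + 1 + s) + 1 := by omega
      rw [h3, hstep, h1, h2]; push_cast; ring
  set F : ℕ → ℚ := fun n => ∑ i ∈ Finset.range n, β i with hF
  have hIco : ∀ m n, m ≤ n → ∑ i ∈ Finset.Ico m n, β i = F n - F m := by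
    intro m n h; rw [Finset.sum_Ico_eq_sub _ h]
  have hI : ∀ t, t < ℓ → F (a + t) - F a = t * β a + (t.choose 2 : ℚ) * p := by
    intro t ht
    rw [← hIco a (a + t) (by omega), Finset.sum_Ico_eq_sum_range,
      Nat.add_sub_cancel_left]
    have h1 : ∀ i ∈ Finset.range t, β (a + i) = β a + i * p := by
      intro i hi
      exact hA i (by have := Finset.mem_range.mp hi; omega)
    rw [Finset.sum_congr rfl h1, Finset.sum_add_distrib, Finset.sum_const,
      Finset.card_range, ← Finset.sum_mul, gauss, nsmul_eq_mul]
  have hII : ∀ t, t < ℓ → F (b + ℓ) - F (b + 1 + t) =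
      ((ℓ - 1 - t : ℕ) : ℚ) * β (b + ℓ - 1) - (((ℓ - 1 - t).choose 2 : ℕ) : ℚ) * q := by
    intro t ht
    rcases Nat.eq_zero_or_pos (ℓ - 1 - t) with h0 | hpos
    · have he : b + ℓ = b + 1 + t := by omega
      rw [he, h0]; simp
    · obtain ⟨v, hv⟩ : ∃ v, ℓ - 1 - t = v + 1 := ⟨ℓ - 1 - t - 1, by omega⟩
      have hbl : b + ℓ - 1 = b + 1 + (t + v) := by omega
      have hβ' : β (b + ℓ - 1) = β (b + 1) + (t + v : ℕ) * q := by
        rw [hbl]; exact hB (t + v) (by omega)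
      rw [← hIco (b + 1 + t) (b + ℓ) (by omega), Finset.sum_Ico_eq_sum_range]
      have hcard : b + ℓ - (b + 1 + t) = v + 1 := by omega
      rw [hcard]
      have h1 : ∀ i ∈ Finset.range (v + 1),
          β (b + 1 + t + i) = β (b + 1) + ((t + i : ℕ) : ℚ) * q := by
        intro i hi
        have h3 : b + 1 + t + i = b + 1 + (t + i) := by omega
        rw [h3]; exact hB (t + i) (by have := Finset.mem_range.mp hi; omega)
      rw [Finset.sum_congr rfl h1, hv, hβ', Finset.sum_add_distrib, Finset.sum_const,
        Finset.card_range, nsmul_eq_mul]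
      have h2 : ∑ i ∈ Finset.range (v + 1), ((t + i : ℕ) : ℚ) * q
          = ((v + 1) * t + ((v + 1).choose 2 : ℚ)) * q := by
        rw [← Finset.sum_mul]
        congr 1
        have : ∀ i ∈ Finset.range (v + 1), ((t + i : ℕ) : ℚ) = (t : ℚ) + (i : ℚ) := by
          intro i _; push_cast; ring
        rw [Finset.sum_congr rfl this, Finset.sum_add_distrib, Finset.sum_const,
          Finset.card_range, gauss, nsmul_eq_mul]
        push_cast; ring
      rw [h2]
      have h3 := c2 v
      push_cast at h3 ⊢
      linear_combination q * h3
  have key : ∀ t, t < ℓ → ∑ k ∈ Finset.Icc a b, β (k + t)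
      = (∑ k ∈ Finset.Icc a (b + ℓ - 1), β k) - (t : ℚ) * β a - (t.choose 2 : ℚ) * p
        - ((ℓ - 1 - t : ℕ) : ℚ) * β (b + ℓ - 1) + (((ℓ - 1 - t).choose 2 : ℕ) : ℚ) * q := by
    intro t ht
    have e1 : ∑ k ∈ Finset.Icc a b, β (k + t) = F (b + 1 + t) - F (a + t) := by
      rw [← Finset.Ico_add_one_right_eq_Icc, Finset.sum_Ico_eq_sum_range,
        ← hIco (a + t) (b + 1 + t) (by omega), Finset.sum_Ico_eq_sum_range]
      have h1 : b + 1 + t - (a + t) = b + 1 - a := by omega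
      rw [h1]
      exact Finset.sum_congr rfl (fun i _ => by congr 1; omega)
    have e2 : ∑ k ∈ Finset.Icc a (b + ℓ - 1), β k = F (b + ℓ) - F a := by
      rw [← Finset.Ico_add_one_right_eq_Icc, show b + ℓ - 1 + 1 = b + ℓ by omega,
        hIco a (b + ℓ) (by omega)]
    have h1 := hI t ht
    have h2 := hII t ht
    rw [e1, e2]
    linarith
  have hshift : ∀ f : ℕ → ℚ, ∑ j ∈ Finset.Icc 1 ℓ, f j
      = ∑ t ∈ Finset.range ℓ, f (t + 1) := by
    intro f
    rw [← Finset.Ico_add_one_right_eq_Icc, Finset.sum_Ico_eq_sum_range]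
    simp only [Nat.add_sub_cancel]
    exact Finset.sum_congr rfl (fun i _ => by rw [Nat.add_comm])
  have refl1 : ∑ t ∈ Finset.range ℓ, (t : ℚ) * η (ℓ - t)
      = ∑ t ∈ Finset.range ℓ, ((ℓ - 1 - t : ℕ) : ℚ) * η (t + 1) := by
    rw [← Finset.sum_range_reflect (fun t => ((ℓ - 1 - t : ℕ) : ℚ) * η (t + 1)) ℓ]
    apply Finset.sum_congr rfl
    intro t ht
    have h := Finset.mem_range.mp ht
    have h1 : ℓ - 1 - (ℓ - 1 - t) = t := by omega
    have h2 : ℓ - 1 - t + 1 = ℓ - t := by omega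
    rw [h1, h2]
  have refl2 : ∑ t ∈ Finset.range ℓ, (t.choose 2 : ℚ) * η (ℓ - t)
      = ∑ t ∈ Finset.range ℓ, (((ℓ - 1 - t).choose 2 : ℕ) : ℚ) * η (t + 1) := by
    rw [← Finset.sum_range_reflect (fun t => (((ℓ - 1 - t).choose 2 : ℕ) : ℚ) * η (t + 1)) ℓ]
    apply Finset.sum_congr rfl
    intro t ht
    have h := Finset.mem_range.mp ht
    have h1 : ℓ - 1 - (ℓ - 1 - t) = t := by omega
    have h2 : ℓ - 1 - t + 1 = ℓ - t := by omega
    rw [h1, h2]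
  -- Left-hand side
  have L1 : ∑ k ∈ Finset.Icc a b, (η 0 + ∑ j ∈ Finset.Icc 1 ℓ, η j * β (k + j - 1))
      = ((b + 1 - a : ℕ) : ℚ) * η 0
        + ∑ t ∈ Finset.range ℓ, η (t + 1) * ∑ k ∈ Finset.Icc a b, β (k + t) := by
    rw [Finset.sum_add_distrib, Finset.sum_const, Nat.card_Icc, nsmul_eq_mul,
      Finset.sum_comm,
      hshift (fun j => ∑ k ∈ Finset.Icc a b, η j * β (k + j - 1))]
    congr 1
    apply Finset.sum_congr rfl
    intro t _
    rw [Finset.mul_sum]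
    apply Finset.sum_congr rfl
    intro k _
    congr 2
  have L2 : ∑ t ∈ Finset.range ℓ, η (t + 1) * ∑ k ∈ Finset.Icc a b, β (k + t)
      = ∑ t ∈ Finset.range ℓ, η (t + 1) *
        ((∑ k ∈ Finset.Icc a (b + ℓ - 1), β k) - (t : ℚ) * β a - (t.choose 2 : ℚ) * p
          - ((ℓ - 1 - t : ℕ) : ℚ) * β (b + ℓ - 1)
          + (((ℓ - 1 - t).choose 2 : ℕ) : ℚ) * q) :=
    Finset.sum_congr rfl fun t ht => by rw [key t (Finset.mem_range.mp ht)]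
  have main : ∑ t ∈ Finset.range ℓ, η (t + 1) *
      ((∑ k ∈ Finset.Icc a (b + ℓ - 1), β k) - (t : ℚ) * β a - (t.choose 2 : ℚ) * p
        - ((ℓ - 1 - t : ℕ) : ℚ) * β (b + ℓ - 1)
        + (((ℓ - 1 - t).choose 2 : ℕ) : ℚ) * q)
      = (∑ t ∈ Finset.range ℓ, η (t + 1)) * (∑ k ∈ Finset.Icc a (b + ℓ - 1), β k)
        - (∑ t ∈ Finset.range ℓ, (t : ℚ) * η (t + 1)) * β a
        - (∑ t ∈ Finset.range ℓ, ((ℓ - 1 - t : ℕ) : ℚ) * η (t + 1)) * β (b + ℓ - 1)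
        - (∑ t ∈ Finset.range ℓ, (t.choose 2 : ℚ) * η (t + 1)) * p
        + (∑ t ∈ Finset.range ℓ, (((ℓ - 1 - t).choose 2 : ℕ) : ℚ) * η (t + 1)) * q := by
    rw [Finset.sum_mul, Finset.sum_mul, Finset.sum_mul, Finset.sum_mul, Finset.sum_mul,
      ← Finset.sum_sub_distrib, ← Finset.sum_sub_distrib, ← Finset.sum_sub_distrib,
      ← Finset.sum_add_distrib]
    exact Finset.sum_congr rfl fun t _ => by ring
  rw [L1, L2,
    hshift (fun j => ((j - 1).choose 0 : ℚ) * η j),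
    hshift (fun j => ((j - 1).choose 1 : ℚ) * η j),
    hshift (fun j => ((j - 1).choose 1 : ℚ) * η (ℓ + 1 - j)),
    hshift (fun j => ((j - 1).choose 2 : ℚ) * η j),
    hshift (fun j => ((j - 1).choose 2 : ℚ) * η (ℓ + 1 - j))]
  simp only [Nat.add_sub_cancel, Nat.succ_sub_succ, Nat.sub_zero, Nat.choose_zero_right,
    Nat.choose_one_right, Nat.cast_one, one_mul]
  rw [refl1, refl2]
  have hcast : ((b + 1 - a : ℕ) : ℚ) = (b : ℚ) - (a : ℚ) + 1 := by
    rw [Nat.cast_sub hab]; push_cast; ring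
  rw [hcast, main]
  ring
end

section
/- Let δ ≥ 1, and let Δ be an h-transverse polygon of height M whose width sequence β(Δ) = (β_0(Δ),…,β_M(Δ)) is nonconstant and all of whose extremal edges have length at least δ. Let β = (β_0,…,β_M) ∈ ℤ_{≥0}^{M+1} satisfy β_i = β_i(Δ) for all i with i ≤ δ or i ≥ M−δ, and β_i ≥ δ for δ < i < M−δ. Let Γ be a template of length ℓ and cogenus δ. Then for every k ≥ 0 such that δ + ε_1(Γ) ≤ ℓ − 1 + k and k ≤ M − δ − ε_0(Γ), the shifted graph Γ_{(k)} is both β-semiallowable and β(Δ)-semiallowable. If moreover d^t ≥ δ (resp. d^b ≥ δ), then Γ_{(k)} is β-semiallowable and β(Δ)-semiallowable whenever 0 ≤ k ≤ M − δ − ε_0(Γ) (resp. whenever δ + ε_1(Γ) ≤ ℓ − 1 + k ≤ M). -/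
open scoped Classical

/-- An h-transverse polygon (up to lattice translation), encoded by its height `M ≥ 1`, its
top and bottom widths `d^t` and `d^b`, and its left and right direction sequences `l, r`
(0-indexed: `l i`, resp. `r i`, is the slope of the normal vector on the left, resp. right,
side at half-integer height between levels `i` and `i+1`, read from top to bottom, for
`0 ≤ i < M`).  The right directions are nonincreasing and the left ones nondecreasing, the
widths at interior heights are positive, and the total width change matches `d^b`. -/
structure HTransverse where
  M : ℕ
  M_pos : 0 < M
  dt : ℕ
  db : ℕ
  l : ℕ → ℤ
  r : ℕ → ℤ
  r_antitone : ∀ ⦃i j : ℕ⦄, i ≤ j → j < M → r j ≤ r i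
  l_monotone : ∀ ⦃i j : ℕ⦄, i ≤ j → j < M → l i ≤ l j
  width_pos : ∀ i : ℕ, 0 < i → i < M → 0 < (dt : ℤ) + ∑ j ∈ Finset.range i, (r j - l j)
  width_closes : (dt : ℤ) + ∑ j ∈ Finset.range M, (r j - l j) = (db : ℤ)

/-- The partial-sum sequence `β(d^t, r − l)`:
`β_i = d^t + ∑_{j<i} (r_j − l_j)` for `0 ≤ i ≤ M`. -/
def betaOf (dt : ℤ) (l r : ℕ → ℤ) (i : ℕ) : ℤ :=
  dt + ∑ j ∈ Finset.range i, (r j - l j)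

namespace HTransverse

/-- The width sequence `β(Δ)` of the polygon: the widths at integer heights, top to bottom. -/
def beta (P : HTransverse) (i : ℕ) : ℤ := betaOf (P.dt : ℤ) P.l P.r i

/-- There is a vertex of `Δ` on the right side at level `N`, `0 < N < M` (an internal vertex
of the right boundary): the right direction changes there. -/
def IsRightVertex (P : HTransverse) (N : ℕ) : Prop :=
  0 < N ∧ N < P.M ∧ P.r (N - 1) ≠ P.r N

/-- There is a vertex of `Δ` on the left side at level `N`, `0 < N < M`. -/
def IsLeftVertex (P : HTransverse) (N : ℕ) : Prop :=
  0 < N ∧ N < P.M ∧ P.l (N - 1) ≠ P.l N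

/-- There is an internal vertex of `Δ` at level `N` (on either side). -/
def IsInternalVertex (P : HTransverse) (N : ℕ) : Prop :=
  P.IsRightVertex N ∨ P.IsLeftVertex N

/-- Every extremal edge of `Δ` has (lattice) length at least `E`: every internal vertex is at
level at least `E` from the top and at least `E` from the bottom. -/
def ExtremalGE (P : HTransverse) (E : ℤ) : Prop :=
  ∀ N, P.IsInternalVertex N → E ≤ (N : ℤ) ∧ (N : ℤ) + E ≤ (P.M : ℤ)

/-- Every internal edge of `Δ` has (lattice) length at least `E`: internal vertices on the
same side are at least `E` levels apart. -/
def InternalGE (P : HTransverse) (E : ℤ) : Prop :=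
  (∀ N N', P.IsRightVertex N → P.IsRightVertex N' → N < N' → (N : ℤ) + E ≤ (N' : ℤ)) ∧
  (∀ N N', P.IsLeftVertex N → P.IsLeftVertex N' → N < N' → (N : ℤ) + E ≤ (N' : ℤ))

end HTransverse

/-- `s` is a rearrangement of the first `M` entries of `s0`. -/
def IsRearrangement (M : ℕ) (s0 s : ℕ → ℤ) : Prop :=
  ∃ σ : Equiv.Perm (Fin M), ∀ i : Fin M, s (i : ℕ) = s0 ((σ i : ℕ))

/-- The cogenus `δ(l, r)` of a pair of integer sequences of length `M` (0-indexed):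
`δ(l,r) = ∑_{(i,j) ∈ Rev(r)} (r_j − r_i) + ∑_{(i,j) ∈ Rev(−l)} (l_i − l_j)`. -/
def cogenusLR (M : ℕ) (l r : ℕ → ℤ) : ℤ :=
  (∑ p ∈ (Finset.range M ×ˢ Finset.range M).filter (fun p => p.1 < p.2 ∧ r p.1 < r p.2),
      (r p.2 - r p.1)) +
  (∑ p ∈ (Finset.range M ×ˢ Finset.range M).filter (fun p => p.1 < p.2 ∧ l p.2 < l p.1),
      (l p.1 - l p.2))

open LongEdgeGraph

/-- `G` is `β`-semiallowable for an integer-valued sequence `β = (β_0, …, β_M)`: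
`maxv(G) ≤ M + 1` and `β_{j−1} ≥ λ̄_j(G)` for each `j`. -/
def SemiallowableZ (M : ℕ) (β : ℕ → ℤ) (G : LongEdgeGraph) : Prop :=
  G.maxv ≤ M + 1 ∧ ∀ j, 1 ≤ j → j ≤ M + 1 → (G.lambar j : ℤ) ≤ β (j - 1)


/-- Any nonempty multiset has an element minimizing a ℕ-valued function. -/
lemma multiset_exists_min {α : Type*} (s : Multiset α) (hs : s ≠ 0) (f : α → ℕ) :
    ∃ a ∈ s, ∀ b ∈ s, f a ≤ f b := by
  induction s using Multiset.induction with
  | empty => exact absurd rfl hs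
  | cons c t ih =>
    rcases eq_or_ne t 0 with rfl | ht
    · exact ⟨c, Multiset.mem_cons_self c 0, by
        intro b hb; rcases Multiset.mem_cons.1 hb with rfl | hb
        · exact le_rfl
        · simp at hb⟩
    · obtain ⟨a, ha, hmin⟩ := ih ht
      rcases le_or_gt (f c) (f a) with h | h
      · exact ⟨c, Multiset.mem_cons_self c t, by
          intro b hb; rcases Multiset.mem_cons.1 hb with rfl | hb
          · exact le_rfl
          · exact h.trans (hmin b hb)⟩
      · exact ⟨a, Multiset.mem_cons_of_mem ha, by
          intro b hb; rcases Multiset.mem_cons.1 hb with rfl | hb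
          · exact h.le
          · exact hmin b hb⟩

lemma multiset_exists_max {α : Type*} (s : Multiset α) (hs : s ≠ 0) (f : α → ℕ) :
    ∃ a ∈ s, ∀ b ∈ s, f b ≤ f a := by
  induction s using Multiset.induction with
  | empty => exact absurd rfl hs
  | cons c t ih =>
    rcases eq_or_ne t 0 with rfl | ht
    · refine ⟨c, Multiset.mem_cons_self c 0, ?_⟩
      intro b hb; rcases Multiset.mem_cons.1 hb with rfl | hb
      · exact le_rfl
      · simp at hb
    · obtain ⟨a, ha, hmax⟩ := ih ht
      rcases le_or_gt (f c) (f a) with h | h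
      · refine ⟨a, Multiset.mem_cons_of_mem ha, ?_⟩
        intro b hb; rcases Multiset.mem_cons.1 hb with rfl | hb
        · exact h
        · exact hmax b hb
      · refine ⟨c, Multiset.mem_cons_self c t, ?_⟩
        intro b hb; rcases Multiset.mem_cons.1 hb with rfl | hb
        · exact le_rfl
        · exact (hmax b hb).trans h.le

/-- Covering lemma: if every vertex strictly between `a` and `b` is strictly covered by
some edge of `S`, then the total of `(length − 1)` over `S` is at least `b − 1 − a`. -/
lemma cover_sum (S : Multiset (ℕ × ℕ × ℕ)) : ∀ a b : ℕ,
    (∀ v, a < v → v < b → ∃ e ∈ S, e.1 < v ∧ v < e.2.1) →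
    b - 1 - a ≤ (S.map fun e => e.2.1 - e.1 - 1).sum := by
  induction S using Multiset.strongInductionOn with
  | _ S ih =>
    intro a b hcov
    by_cases hab : b ≤ a + 1
    · omega
    · obtain ⟨e, heS, he1, he2⟩ := hcov (a + 1) (by omega) (by omega)
      have hlt : S.erase e < S := Multiset.erase_lt.2 heS
      have hrec := ih (S.erase e) hlt (e.2.1 - 1) b ?_
      · have hsum : (S.map fun e => e.2.1 - e.1 - 1).sum
            = (e.2.1 - e.1 - 1) + ((S.erase e).map fun e => e.2.1 - e.1 - 1).sum := by
          conv_lhs => rw [← Multiset.cons_erase heS]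
          simp
        omega
      · intro v hv1 hv2
        obtain ⟨f, hfS, hf1, hf2⟩ := hcov v (by omega) hv2
        have hfe : f ≠ e := by
          intro h; subst h; omega
        exact ⟨f, (Multiset.mem_erase_of_ne hfe).2 hfS, hf1, hf2⟩

lemma card_filter_eq_sum {α : Type*} (q : α → Prop) [DecidablePred q] (S : Multiset α) :
    Multiset.card (S.filter q) = (S.map fun e => if q e then (1 : ℕ) else 0).sum := by
  induction S using Multiset.induction with
  | empty => simp
  | cons c t ih =>
    rw [Multiset.filter_cons]
    by_cases h : q c <;> simp [h, ih, Nat.add_comm]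
namespace LongEdgeGraph

lemma edges_ne_zero (G : LongEdgeGraph) (h : 1 ≤ G.cogenus) : G.edges ≠ 0 := by
  intro h0
  rw [cogenus, h0] at h
  simp at h

lemma verts_nonempty (G : LongEdgeGraph) (h : G.edges ≠ 0) : G.verts.Nonempty := by
  obtain ⟨e, he⟩ := Multiset.exists_mem_of_ne_zero h
  exact ⟨e.1, e, he, Or.inl rfl⟩

lemma verts_bddAbove (G : LongEdgeGraph) : BddAbove G.verts := by
  refine ⟨(G.edges.map fun e => e.2.1).sum, ?_⟩
  rintro v ⟨e, he, hv⟩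
  have h1 := (G.valid e he).1
  have h2 : e.2.1 ≤ (G.edges.map fun e => e.2.1).sum :=
    Multiset.single_le_sum (fun x _ => Nat.zero_le x) _ (Multiset.mem_map_of_mem _ he)
  rcases hv with hv | hv <;> omega

lemma le_maxv (G : LongEdgeGraph) {v : ℕ} (hv : v ∈ G.verts) : v ≤ G.maxv :=
  le_csSup G.verts_bddAbove hv

lemma snd_le_maxv (G : LongEdgeGraph) {e : ℕ × ℕ × ℕ} (he : e ∈ G.edges) : e.2.1 ≤ G.maxv :=
  G.le_maxv ⟨e, he, Or.inr rfl⟩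

lemma minv_le (G : LongEdgeGraph) {v : ℕ} (hv : v ∈ G.verts) : G.minv ≤ v :=
  Nat.sInf_le hv

lemma exists_edge_from_zero (G : LongEdgeGraph) (hne : G.edges ≠ 0) (hmin : G.minv = 0) :
    ∃ e ∈ G.edges, e.1 = 0 := by
  have hmem : G.minv ∈ G.verts := Nat.sInf_mem (G.verts_nonempty hne)
  rw [hmin] at hmem
  obtain ⟨e, he, hv⟩ := hmem
  rcases hv with h | h
  · exact ⟨e, he, h⟩
  · exact absurd (G.valid e he).1 (by omega)

lemma one_le_maxv (G : LongEdgeGraph) (hne : G.edges ≠ 0) (hmin : G.minv = 0) :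
    1 ≤ G.maxv := by
  obtain ⟨e, he, h0⟩ := G.exists_edge_from_zero hne hmin
  have h1 := (G.valid e he).1
  have h2 := G.snd_le_maxv he
  omega

lemma exists_heavy_min (G : LongEdgeGraph) (h : G.eps0 = 0) :
    ∃ e ∈ G.edges, e.1 = G.minv ∧ 2 ≤ e.2.2 := by
  rw [eps0] at h
  split at h
  · exact absurd h one_ne_zero
  · next hc =>
    push_neg at hc
    obtain ⟨e, he, hinc, hw⟩ := hc
    have hv := (G.valid e he).2.1
    rcases hinc with h1 | h1
    · exact ⟨e, he, h1, by omega⟩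
    · exfalso
      have h2 := G.minv_le (⟨e, he, Or.inl rfl⟩ : e.1 ∈ G.verts)
      have h3 := (G.valid e he).1
      omega

lemma exists_heavy_max (G : LongEdgeGraph) (h : G.eps1 = 0) :
    ∃ e ∈ G.edges, e.2.1 = G.maxv ∧ 2 ≤ e.2.2 := by
  rw [eps1] at h
  split at h
  · exact absurd h one_ne_zero
  · next hc =>
    push_neg at hc
    obtain ⟨e, he, hinc, hw⟩ := hc
    have hv := (G.valid e he).2.1
    rcases hinc with h1 | h1
    · exfalso
      have h2 := G.snd_le_maxv he
      have h3 := (G.valid e he).1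
      omega
    · exact ⟨e, he, h1, by omega⟩

lemma eps0_le_one (G : LongEdgeGraph) : G.eps0 ≤ 1 := by
  rw [eps0]; split <;> omega

lemma eps1_le_one (G : LongEdgeGraph) : G.eps1 ≤ 1 := by
  rw [eps1]; split <;> omega

/-- Per-edge contribution to `λ̄_j`. -/
def contribJ (j : ℕ) (e : ℕ × ℕ × ℕ) : ℕ :=
  e.2.2 - (if e.1 + 1 = j ∧ e.2.1 = j then 1 else 0)

lemma lambar_eq (G : LongEdgeGraph) (j : ℕ) :
    G.lambar j = ((G.edges.filter fun e => e.1 < j ∧ j ≤ e.2.1).map (contribJ j)).sum := by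
  have hshort : (G.edges.filter fun e => e.1 + 1 = j ∧ e.2.1 = j)
      = (G.edges.filter fun e => e.1 < j ∧ j ≤ e.2.1).filter
          fun e => e.1 + 1 = j ∧ e.2.1 = j := by
    rw [Multiset.filter_filter]
    apply Multiset.filter_congr
    intro e _
    constructor
    · rintro ⟨h1, h2⟩
      exact ⟨⟨h1, h2⟩, by omega, by omega⟩
    · rintro ⟨h, _⟩
      exact h
  set E := G.edges.filter fun e => e.1 < j ∧ j ≤ e.2.1 with hE
  have hsplit : (E.map fun e => e.2.2).sum
      = (E.map (contribJ j)).sum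
        + (E.map fun e => if e.1 + 1 = j ∧ e.2.1 = j then (1 : ℕ) else 0).sum := by
    rw [← Multiset.sum_map_add]
    apply congrArg
    apply Multiset.map_congr rfl
    intro e he
    have heG : e ∈ G.edges := Multiset.mem_of_mem_filter he
    have hv1 := (G.valid e heG).2.1
    have hv2 := (G.valid e heG).2.2
    rw [contribJ]
    split
    · next hsh =>
      have : e.2.2 ≠ 1 := fun h1 => hv2 ⟨by omega, h1⟩
      omega
    · omega
  rw [lambar, lam, ← hE, hshort, card_filter_eq_sum, hsplit]
  omega

lemma one_le_contribJ (G : LongEdgeGraph) {j : ℕ} {e : ℕ × ℕ × ℕ} (he : e ∈ G.edges) :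
    1 ≤ contribJ j e := by
  have hv1 := (G.valid e he).2.1
  have hv2 := (G.valid e he).2.2
  rw [contribJ]
  split
  · next hsh =>
    have : e.2.2 ≠ 1 := fun h1 => hv2 ⟨by omega, h1⟩
    omega
  · omega

lemma contribJ_le_ecost (G : LongEdgeGraph) {j : ℕ} {e : ℕ × ℕ × ℕ} (he : e ∈ G.edges)
    (h1 : e.1 < j) (h2 : j ≤ e.2.1) :
    contribJ j e ≤ (e.2.1 - e.1) * e.2.2 - 1 := by
  have hv0 := (G.valid e he).1
  have hv1 := (G.valid e he).2.1
  have hv2 := (G.valid e he).2.2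
  rw [contribJ]
  split
  · next hsh =>
    have hl : e.2.1 - e.1 = 1 := by omega
    rw [hl]; omega
  · next hsh =>
    have hlen : 2 ≤ e.2.1 - e.1 := by
      by_contra hc
      have : e.2.1 = e.1 + 1 := by omega
      exact hsh ⟨by omega, by omega⟩
    have h3 : 2 * e.2.2 ≤ (e.2.1 - e.1) * e.2.2 := Nat.mul_le_mul_right _ hlen
    omega

lemma lambar_le_cogenus (G : LongEdgeGraph) (j : ℕ) : G.lambar j ≤ G.cogenus := by
  rw [lambar_eq]
  have h1 : ((G.edges.filter fun e => e.1 < j ∧ j ≤ e.2.1).map (contribJ j)).sum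
      ≤ ((G.edges.filter fun e => e.1 < j ∧ j ≤ e.2.1).map
          fun e => (e.2.1 - e.1) * e.2.2 - 1).sum := by
    apply Multiset.sum_map_le_sum_map
    intro e he
    have := Multiset.mem_filter.1 he
    exact G.contribJ_le_ecost this.1 this.2.1 this.2.2
  refine h1.trans ?_
  rw [cogenus]
  conv_rhs => rw [← Multiset.filter_add_not (fun e => e.1 < j ∧ j ≤ e.2.1) G.edges]
  rw [Multiset.map_add, Multiset.sum_add]
  exact Nat.le_add_right _ _

lemma exists_cover (G : LongEdgeGraph) (hmin : G.minv = 0)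
    (htpl : ∀ i, 1 ≤ i → i + 1 ≤ G.lengthG → ∃ e ∈ G.edges, e.1 < i ∧ i < e.2.1)
    (hne : G.edges ≠ 0) {j : ℕ} (hj1 : 1 ≤ j) (hjl : j ≤ G.maxv) :
    ∃ e ∈ G.edges, e.1 < j ∧ j ≤ e.2.1 := by
  have hlg : G.lengthG = G.maxv := by rw [lengthG, hmin]; omega
  rcases eq_or_lt_of_le hj1 with h | h
  · obtain ⟨e, he, h0⟩ := G.exists_edge_from_zero hne hmin
    have := (G.valid e he).1
    exact ⟨e, he, by omega, by omega⟩
  · obtain ⟨e, he, h1, h2⟩ := htpl (j - 1) (by omega) (by omega)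
    exact ⟨e, he, by omega, by omega⟩

lemma one_le_lambar (G : LongEdgeGraph) (hmin : G.minv = 0)
    (htpl : ∀ i, 1 ≤ i → i + 1 ≤ G.lengthG → ∃ e ∈ G.edges, e.1 < i ∧ i < e.2.1)
    (hne : G.edges ≠ 0) {j : ℕ} (hj1 : 1 ≤ j) (hjl : j ≤ G.maxv) :
    1 ≤ G.lambar j := by
  obtain ⟨e, he, h1, h2⟩ := G.exists_cover hmin htpl hne hj1 hjl
  rw [lambar_eq]
  have hmem : e ∈ G.edges.filter fun e => e.1 < j ∧ j ≤ e.2.1 :=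
    Multiset.mem_filter.2 ⟨he, h1, h2⟩
  calc 1 ≤ contribJ j e := G.one_le_contribJ he
    _ ≤ _ := Multiset.single_le_sum (fun x _ => Nat.zero_le x) _
        (Multiset.mem_map_of_mem _ hmem)

lemma lambar_eq_zero_of_gt (G : LongEdgeGraph) {j : ℕ} (hj : G.maxv < j) :
    G.lambar j = 0 := by
  have hE : (G.edges.filter fun e => e.1 < j ∧ j ≤ e.2.1) = 0 := by
    rw [Multiset.filter_eq_nil]
    intro e he hc
    have := G.snd_le_maxv he
    omega
  rw [lambar_eq, hE]
  simp

lemma lambar_shift_of_le (G : LongEdgeGraph) (k : ℕ) {j : ℕ} (hjk : j ≤ k) :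
    (G.shiftG k).lambar j = 0 := by
  have hE : ((G.shiftG k).edges.filter fun e => e.1 < j ∧ j ≤ e.2.1) = 0 := by
    rw [Multiset.filter_eq_nil]
    intro e he hc
    rw [shiftG, Multiset.mem_map] at he
    obtain ⟨a, _, rfl⟩ := he
    simp only at hc
    omega
  rw [lambar_eq, hE]
  simp

lemma lambar_shift (G : LongEdgeGraph) (k : ℕ) (j : ℕ) :
    (G.shiftG k).lambar (j + k) = G.lambar j ∨ (j = 0) := by
  rcases Nat.eq_zero_or_pos j with h | h
  · exact Or.inr h
  left
  rw [lambar, lambar, lam, lam]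
  have he : (G.shiftG k).edges = G.edges.map fun e => (e.1 + k, e.2.1 + k, e.2.2) := rfl
  rw [he, Multiset.filter_map, Multiset.filter_map, Multiset.map_map, Multiset.card_map]
  have h1 : G.edges.filter ((fun e => e.1 < j + k ∧ j + k ≤ e.2.1)
        ∘ fun e => (e.1 + k, e.2.1 + k, e.2.2))
      = G.edges.filter fun e => e.1 < j ∧ j ≤ e.2.1 := by
    apply Multiset.filter_congr
    intro e _
    simp only [Function.comp]
    constructor
    · rintro ⟨a, b⟩; exact ⟨by omega, by omega⟩
    · rintro ⟨a, b⟩; exact ⟨by omega, by omega⟩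
  have h2 : G.edges.filter ((fun e => e.1 + 1 = j + k ∧ e.2.1 = j + k)
        ∘ fun e => (e.1 + k, e.2.1 + k, e.2.2))
      = G.edges.filter fun e => e.1 + 1 = j ∧ e.2.1 = j := by
    apply Multiset.filter_congr
    intro e _
    simp only [Function.comp]
    constructor
    · rintro ⟨a, b⟩; exact ⟨by omega, by omega⟩
    · rintro ⟨a, b⟩; exact ⟨by omega, by omega⟩
  rw [h1, h2]
  rfl

lemma maxv_shift_le (G : LongEdgeGraph) (k : ℕ) : (G.shiftG k).maxv ≤ G.maxv + k := by
  rw [maxv]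
  rcases (G.shiftG k).verts.eq_empty_or_nonempty with h | h
  · rw [h, csSup_empty]
    exact Nat.zero_le _
  · apply csSup_le h
    rintro v ⟨e, he, hv⟩
    have he' : e ∈ (G.edges.map fun e => (e.1 + k, e.2.1 + k, e.2.2)) := he
    rw [Multiset.mem_map] at he'
    obtain ⟨a, ha, rfl⟩ := he'
    have h1 := (G.valid a ha).1
    have h2 := G.snd_le_maxv ha
    simp only at hv
    rcases hv with hv | hv <;> omega

end LongEdgeGraph
namespace LongEdgeGraph

lemma ecost_ge_len (G : LongEdgeGraph) {e : ℕ × ℕ × ℕ} (he : e ∈ G.edges) :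
    e.2.1 - e.1 - 1 ≤ (e.2.1 - e.1) * e.2.2 - 1 := by
  have hv0 := (G.valid e he).1
  have hv1 := (G.valid e he).2.1
  have h1 : e.2.1 - e.1 ≤ (e.2.1 - e.1) * e.2.2 := Nat.le_mul_of_pos_right _ (by omega)
  omega

lemma ecost_ge_len_heavy (G : LongEdgeGraph) {e : ℕ × ℕ × ℕ} (he : e ∈ G.edges)
    (hw : 2 ≤ e.2.2) :
    e.2.1 - e.1 - 1 + 1 ≤ (e.2.1 - e.1) * e.2.2 - 1 := by
  have hv0 := (G.valid e he).1
  have h1 : (e.2.1 - e.1) * 2 ≤ (e.2.1 - e.1) * e.2.2 := Nat.mul_le_mul_left _ hw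
  omega

lemma lambar_add_le_eps0 (G : LongEdgeGraph) (hmin : G.minv = 0)
    (htpl : ∀ i, 1 ≤ i → i + 1 ≤ G.lengthG → ∃ e ∈ G.edges, e.1 < i ∧ i < e.2.1)
    (hne : G.edges ≠ 0) (j : ℕ) (hj1 : 1 ≤ j) (hjl : j ≤ G.maxv) :
    G.lambar j + (j - 1) ≤ G.cogenus + G.eps0 := by
  classical
  have hlg : G.lengthG = G.maxv := by rw [lengthG, hmin]; omega
  set p : ℕ × ℕ × ℕ → Prop := fun e => e.1 < j ∧ j ≤ e.2.1 with hp
  set E := G.edges.filter p with hE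
  set F := G.edges.filter (fun e => ¬ p e) with hF
  have hEF : E + F = G.edges := Multiset.filter_add_not p G.edges
  have hcog : G.cogenus = (E.map fun e => (e.2.1 - e.1) * e.2.2 - 1).sum
      + (F.map fun e => (e.2.1 - e.1) * e.2.2 - 1).sum := by
    rw [cogenus, ← hEF, Multiset.map_add, Multiset.sum_add]
  have hlb : G.lambar j = (E.map (contribJ j)).sum := G.lambar_eq j
  -- coverage of [1, m] by F, where m is the least left endpoint in E
  obtain ⟨e0, he0, he01, he02⟩ := G.exists_cover hmin htpl hne hj1 hjl
  have he0E : e0 ∈ E := Multiset.mem_filter.2 ⟨he0, he01, he02⟩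
  have hEne : E ≠ 0 := fun h => by rw [h] at he0E; simp at he0E
  obtain ⟨est, hestE, hestmin⟩ := multiset_exists_min E hEne (fun e => e.1)
  have hestG : est ∈ G.edges := Multiset.mem_of_mem_filter hestE
  have hestp : p est := (Multiset.mem_filter.1 hestE).2
  set m := est.1 with hm
  have hmj : m < j := hestp.1
  have hjb : j ≤ est.2.1 := hestp.2
  have hFcov : ∀ v, 0 < v → v < m + 1 → ∃ f ∈ F, f.1 < v ∧ v < f.2.1 := by
    intro v hv1 hv2
    obtain ⟨f, hf, hf1, hf2⟩ := htpl v hv1 (by omega)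
    refine ⟨f, Multiset.mem_filter.2 ⟨hf, ?_⟩, hf1, hf2⟩
    intro hpf
    have := hestmin f (Multiset.mem_filter.2 ⟨hf, hpf⟩)
    omega
  have hFm : m ≤ (F.map fun e => e.2.1 - e.1 - 1).sum := by
    have := cover_sum F 0 (m + 1) (by intro v h1 h2; exact hFcov v h1 h2)
    omega
  have hFcost : (F.map fun e => e.2.1 - e.1 - 1).sum
      ≤ (F.map fun e => (e.2.1 - e.1) * e.2.2 - 1).sum := by
    apply Multiset.sum_map_le_sum_map
    intro f hf
    exact G.ecost_ge_len (Multiset.mem_of_mem_filter hf)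
  -- split off est from E
  set P := E.erase est with hP
  have hcons : est ::ₘ P = E := Multiset.cons_erase hestE
  have hEc : (E.map (contribJ j)).sum = contribJ j est + (P.map (contribJ j)).sum := by
    rw [← hcons]; simp
  have hEe : (E.map fun e => (e.2.1 - e.1) * e.2.2 - 1).sum
      = ((est.2.1 - est.1) * est.2.2 - 1) + (P.map fun e => (e.2.1 - e.1) * e.2.2 - 1).sum := by
    rw [← hcons]; simp
  have hPle : (P.map (contribJ j)).sum ≤ (P.map fun e => (e.2.1 - e.1) * e.2.2 - 1).sum := by
    apply Multiset.sum_map_le_sum_map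
    intro f hf
    have hfE : f ∈ E := Multiset.mem_of_mem_erase hf
    have hfp : p f := (Multiset.mem_filter.1 hfE).2
    exact G.contribJ_le_ecost (Multiset.mem_of_mem_filter hfE) hfp.1 hfp.2
  have hv0 := (G.valid est hestG).1
  have hv1 := (G.valid est hestG).2.1
  have hv2 := (G.valid est hestG).2.2
  -- case analysis on est
  by_cases hsh : est.1 + 1 = j ∧ est.2.1 = j
  · -- est is a short edge at j
    have hc : contribJ j est = est.2.2 - 1 := by rw [contribJ, if_pos hsh]
    have hL : est.2.1 - est.1 = 1 := by omega
    have hcost : (est.2.1 - est.1) * est.2.2 - 1 = est.2.2 - 1 := by rw [hL]; omega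
    omega
  · have hc : contribJ j est = est.2.2 := by rw [contribJ, if_neg hsh]; omega
    have hL2 : est.1 + 2 ≤ est.2.1 := by
      by_contra hcon
      exact hsh ⟨by omega, by omega⟩
    by_cases hw : 2 ≤ est.2.2
    · -- heavy long edge: no epsilon needed
      have hmul : (est.2.1 - est.1) + est.2.2 ≤ (est.2.1 - est.1) * est.2.2 :=
        Nat.add_le_mul (by omega) hw
      omega
    · -- est has weight 1
      have hw1 : est.2.2 = 1 := by omega
      have hcost1 : (est.2.1 - est.1) * est.2.2 - 1 = est.2.1 - est.1 - 1 := by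
        rw [hw1]; omega
      have heps : G.eps0 = 0 ∨ G.eps0 = 1 := by rw [eps0]; split <;> simp
      rcases heps with heps | heps
      · -- there is a heavy edge h at 0
        obtain ⟨h, hhG, hh0, hhw⟩ := G.exists_heavy_min heps
        rw [hmin] at hh0
        have hhv := (G.valid h hhG).1
        by_cases hhp : p h
        · -- h covers j as well, so m = 0
          have hhE : h ∈ E := Multiset.mem_filter.2 ⟨hhG, hhp⟩
          have hm0 : m = 0 := by
            have := hestmin h hhE
            omega
          rcases eq_or_lt_of_le hj1 with hj1' | hj2
          · -- j = 1 : no extra budget needed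
            omega
          · -- j ≥ 2 : h is long and heavy, its slack pays the deficit
            have hhne : h ≠ est := by
              intro hcon
              rw [hcon] at hhw
              omega
            have hhP : h ∈ P := (Multiset.mem_erase_of_ne hhne).2 hhE
            have hhL2 : h.1 + 2 ≤ h.2.1 := by
              by_contra hcon
              have hh1 : h.2.1 = h.1 + 1 := by omega
              have : j = h.1 + 1 := by
                have := hhp.1; have := hhp.2; omega
              omega
            have hhsh : ¬(h.1 + 1 = j ∧ h.2.1 = j) := by omega
            have hch : contribJ j h = h.2.2 := by rw [contribJ, if_neg hhsh]; omega
            have hhmul : (h.2.1 - h.1) + h.2.2 ≤ (h.2.1 - h.1) * h.2.2 :=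
              Nat.add_le_mul (by omega) hhw
            -- split off h from P
            set Q := P.erase h with hQ
            have hconsh : h ::ₘ Q = P := Multiset.cons_erase hhP
            have hPc : (P.map (contribJ j)).sum = contribJ j h + (Q.map (contribJ j)).sum := by
              rw [← hconsh]; simp
            have hPe : (P.map fun e => (e.2.1 - e.1) * e.2.2 - 1).sum
                = ((h.2.1 - h.1) * h.2.2 - 1)
                  + (Q.map fun e => (e.2.1 - e.1) * e.2.2 - 1).sum := by
              rw [← hconsh]; simp
            have hQle : (Q.map (contribJ j)).sum
                ≤ (Q.map fun e => (e.2.1 - e.1) * e.2.2 - 1).sum := by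
              apply Multiset.sum_map_le_sum_map
              intro f hf
              have hfE : f ∈ E := Multiset.mem_of_mem_erase (Multiset.mem_of_mem_erase hf)
              have hfp : p f := (Multiset.mem_filter.1 hfE).2
              exact G.contribJ_le_ecost (Multiset.mem_of_mem_filter hfE) hfp.1 hfp.2
            omega
        · -- h is in F : extra credit in the F part
          have hhF : h ∈ F := Multiset.mem_filter.2 ⟨hhG, hhp⟩
          set R := F.erase h with hR
          have hconsh : h ::ₘ R = F := Multiset.cons_erase hhF
          have hFe : (F.map fun e => (e.2.1 - e.1) * e.2.2 - 1).sum
              = ((h.2.1 - h.1) * h.2.2 - 1)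
                + (R.map fun e => (e.2.1 - e.1) * e.2.2 - 1).sum := by
            rw [← hconsh]; simp
          have hFl : (F.map fun e => e.2.1 - e.1 - 1).sum
              = (h.2.1 - h.1 - 1) + (R.map fun e => e.2.1 - e.1 - 1).sum := by
            rw [← hconsh]; simp
          have hRcost : (R.map fun e => e.2.1 - e.1 - 1).sum
              ≤ (R.map fun e => (e.2.1 - e.1) * e.2.2 - 1).sum := by
            apply Multiset.sum_map_le_sum_map
            intro f hf
            exact G.ecost_ge_len (Multiset.mem_of_mem_filter (Multiset.mem_of_mem_erase hf))
          have hhheavy := G.ecost_ge_len_heavy hhG hhw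
          omega
      · omega

end LongEdgeGraph
namespace LongEdgeGraph

lemma lambar_add_le_eps1 (G : LongEdgeGraph) (hmin : G.minv = 0)
    (htpl : ∀ i, 1 ≤ i → i + 1 ≤ G.lengthG → ∃ e ∈ G.edges, e.1 < i ∧ i < e.2.1)
    (hne : G.edges ≠ 0) (j : ℕ) (hj1 : 1 ≤ j) (hjl : j ≤ G.maxv) :
    G.lambar j + (G.maxv - j) ≤ G.cogenus + G.eps1 := by
  classical
  have hlg : G.lengthG = G.maxv := by rw [lengthG, hmin]; omega
  set p : ℕ × ℕ × ℕ → Prop := fun e => e.1 < j ∧ j ≤ e.2.1 with hp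
  set E := G.edges.filter p with hE
  set F := G.edges.filter (fun e => ¬ p e) with hF
  have hEF : E + F = G.edges := Multiset.filter_add_not p G.edges
  have hcog : G.cogenus = (E.map fun e => (e.2.1 - e.1) * e.2.2 - 1).sum
      + (F.map fun e => (e.2.1 - e.1) * e.2.2 - 1).sum := by
    rw [cogenus, ← hEF, Multiset.map_add, Multiset.sum_add]
  have hlb : G.lambar j = (E.map (contribJ j)).sum := G.lambar_eq j
  obtain ⟨e0, he0, he01, he02⟩ := G.exists_cover hmin htpl hne hj1 hjl
  have he0E : e0 ∈ E := Multiset.mem_filter.2 ⟨he0, he01, he02⟩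
  have hEne : E ≠ 0 := fun h => by rw [h] at he0E; simp at he0E
  obtain ⟨est, hestE, hestmax⟩ := multiset_exists_max E hEne (fun e => e.2.1)
  have hestG : est ∈ G.edges := Multiset.mem_of_mem_filter hestE
  have hestp : p est := (Multiset.mem_filter.1 hestE).2
  have hmj : est.1 < j := hestp.1
  have hjb : j ≤ est.2.1 := hestp.2
  have hbl : est.2.1 ≤ G.maxv := G.snd_le_maxv hestG
  have hFcov : ∀ v, est.2.1 - 1 < v → v < G.maxv → ∃ f ∈ F, f.1 < v ∧ v < f.2.1 := by
    intro v hv1 hv2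
    obtain ⟨f, hf, hf1, hf2⟩ := htpl v (by omega) (by omega)
    refine ⟨f, Multiset.mem_filter.2 ⟨hf, ?_⟩, hf1, hf2⟩
    intro hpf
    have := hestmax f (Multiset.mem_filter.2 ⟨hf, hpf⟩)
    omega
  have hFm : G.maxv - est.2.1 ≤ (F.map fun e => e.2.1 - e.1 - 1).sum := by
    have := cover_sum F (est.2.1 - 1) G.maxv hFcov
    omega
  have hFcost : (F.map fun e => e.2.1 - e.1 - 1).sum
      ≤ (F.map fun e => (e.2.1 - e.1) * e.2.2 - 1).sum := by
    apply Multiset.sum_map_le_sum_map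
    intro f hf
    exact G.ecost_ge_len (Multiset.mem_of_mem_filter hf)
  set P := E.erase est with hP
  have hcons : est ::ₘ P = E := Multiset.cons_erase hestE
  have hEc : (E.map (contribJ j)).sum = contribJ j est + (P.map (contribJ j)).sum := by
    rw [← hcons]; simp
  have hEe : (E.map fun e => (e.2.1 - e.1) * e.2.2 - 1).sum
      = ((est.2.1 - est.1) * est.2.2 - 1) + (P.map fun e => (e.2.1 - e.1) * e.2.2 - 1).sum := by
    rw [← hcons]; simp
  have hPle : (P.map (contribJ j)).sum ≤ (P.map fun e => (e.2.1 - e.1) * e.2.2 - 1).sum := by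
    apply Multiset.sum_map_le_sum_map
    intro f hf
    have hfE : f ∈ E := Multiset.mem_of_mem_erase hf
    have hfp : p f := (Multiset.mem_filter.1 hfE).2
    exact G.contribJ_le_ecost (Multiset.mem_of_mem_filter hfE) hfp.1 hfp.2
  have hv0 := (G.valid est hestG).1
  have hv1 := (G.valid est hestG).2.1
  have hv2 := (G.valid est hestG).2.2
  by_cases hsh : est.1 + 1 = j ∧ est.2.1 = j
  · have hc : contribJ j est = est.2.2 - 1 := by rw [contribJ, if_pos hsh]
    have hL : est.2.1 - est.1 = 1 := by omega
    have hcost : (est.2.1 - est.1) * est.2.2 - 1 = est.2.2 - 1 := by rw [hL]; omega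
    omega
  · have hc : contribJ j est = est.2.2 := by rw [contribJ, if_neg hsh]; omega
    have hL2 : est.1 + 2 ≤ est.2.1 := by
      by_contra hcon
      exact hsh ⟨by omega, by omega⟩
    by_cases hw : 2 ≤ est.2.2
    · have hmul : (est.2.1 - est.1) + est.2.2 ≤ (est.2.1 - est.1) * est.2.2 :=
        Nat.add_le_mul (by omega) hw
      omega
    · have hw1 : est.2.2 = 1 := by omega
      have hcost1 : (est.2.1 - est.1) * est.2.2 - 1 = est.2.1 - est.1 - 1 := by
        rw [hw1]; omega
      have heps : G.eps1 = 0 ∨ G.eps1 = 1 := by rw [eps1]; split <;> simp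
      rcases heps with heps | heps
      · obtain ⟨h, hhG, hh0, hhw⟩ := G.exists_heavy_max heps
        have hhv := (G.valid h hhG).1
        by_cases hhp : p h
        · have hhE : h ∈ E := Multiset.mem_filter.2 ⟨hhG, hhp⟩
          have hbmax : est.2.1 = G.maxv := by
            have := hestmax h hhE
            omega
          by_cases hhsh : h.1 + 1 = j ∧ h.2.1 = j
          · -- then j = maxv
            have hjm : j = G.maxv := by omega
            omega
          · have hhne : h ≠ est := by
              intro hcon
              rw [hcon] at hhw
              omega
            have hhP : h ∈ P := (Multiset.mem_erase_of_ne hhne).2 hhE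
            have hhL2 : h.1 + 2 ≤ h.2.1 := by
              by_contra hcon
              have hh1 : h.2.1 = h.1 + 1 := by omega
              exact hhsh ⟨by omega, by omega⟩
            have hch : contribJ j h = h.2.2 := by rw [contribJ, if_neg hhsh]; omega
            have hhmul : (h.2.1 - h.1) + h.2.2 ≤ (h.2.1 - h.1) * h.2.2 :=
              Nat.add_le_mul (by omega) hhw
            set Q := P.erase h with hQ
            have hconsh : h ::ₘ Q = P := Multiset.cons_erase hhP
            have hPc : (P.map (contribJ j)).sum = contribJ j h + (Q.map (contribJ j)).sum := by
              rw [← hconsh]; simp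
            have hPe : (P.map fun e => (e.2.1 - e.1) * e.2.2 - 1).sum
                = ((h.2.1 - h.1) * h.2.2 - 1)
                  + (Q.map fun e => (e.2.1 - e.1) * e.2.2 - 1).sum := by
              rw [← hconsh]; simp
            have hQle : (Q.map (contribJ j)).sum
                ≤ (Q.map fun e => (e.2.1 - e.1) * e.2.2 - 1).sum := by
              apply Multiset.sum_map_le_sum_map
              intro f hf
              have hfE : f ∈ E := Multiset.mem_of_mem_erase (Multiset.mem_of_mem_erase hf)
              have hfp : p f := (Multiset.mem_filter.1 hfE).2
              exact G.contribJ_le_ecost (Multiset.mem_of_mem_filter hfE) hfp.1 hfp.2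
            omega
        · have hhF : h ∈ F := Multiset.mem_filter.2 ⟨hhG, hhp⟩
          set R := F.erase h with hR
          have hconsh : h ::ₘ R = F := Multiset.cons_erase hhF
          have hFe : (F.map fun e => (e.2.1 - e.1) * e.2.2 - 1).sum
              = ((h.2.1 - h.1) * h.2.2 - 1)
                + (R.map fun e => (e.2.1 - e.1) * e.2.2 - 1).sum := by
            rw [← hconsh]; simp
          have hFl : (F.map fun e => e.2.1 - e.1 - 1).sum
              = (h.2.1 - h.1 - 1) + (R.map fun e => e.2.1 - e.1 - 1).sum := by
            rw [← hconsh]; simp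
          have hRcost : (R.map fun e => e.2.1 - e.1 - 1).sum
              ≤ (R.map fun e => (e.2.1 - e.1) * e.2.2 - 1).sum := by
            apply Multiset.sum_map_le_sum_map
            intro f hf
            exact G.ecost_ge_len (Multiset.mem_of_mem_filter (Multiset.mem_of_mem_erase hf))
          have hhheavy := G.ecost_ge_len_heavy hhG hhw
          omega
      · omega

end LongEdgeGraph
namespace HTransverse

lemma slope_anti (P : HTransverse) {i j : ℕ} (hij : i ≤ j) (hj : j < P.M) :
    P.r j - P.l j ≤ P.r i - P.l i :=
  sub_le_sub (P.r_antitone hij hj) (P.l_monotone hij hj)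

lemma beta_sub (P : HTransverse) {a b : ℕ} (hab : a ≤ b) :
    P.beta b - P.beta a = ∑ j ∈ Finset.Ico a b, (P.r j - P.l j) := by
  rw [beta, beta, betaOf, betaOf, Finset.sum_Ico_eq_sub _ hab]
  ring

lemma beta_zero (P : HTransverse) : P.beta 0 = P.dt := by
  simp [beta, betaOf]

lemma beta_M (P : HTransverse) : P.beta P.M = P.db := P.width_closes

lemma beta_nonneg (P : HTransverse) {i : ℕ} (hi : i ≤ P.M) : 0 ≤ P.beta i := by
  rcases Nat.eq_zero_or_pos i with rfl | h0
  · rw [P.beta_zero]; positivity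
  rcases eq_or_lt_of_le hi with rfl | hiM
  · rw [P.beta_M]; positivity
  · exact (P.width_pos i h0 hiM).le

lemma const_top (P : HTransverse) {δ : ℕ} (hext : P.ExtremalGE (δ : ℤ)) :
    ∀ j : ℕ, (j : ℤ) < (δ : ℤ) → j < P.M → P.r j = P.r 0 ∧ P.l j = P.l 0 := by
  intro j
  induction j with
  | zero => exact fun _ _ => ⟨rfl, rfl⟩
  | succ j ih =>
    intro hj hjM
    have hj' : (j : ℤ) < (δ : ℤ) := by push_cast at hj ⊢; omega
    have hjM' : j < P.M := by omega
    obtain ⟨hr, hl⟩ := ih hj' hjM'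
    have hr2 : P.r (j + 1) = P.r j := by
      by_contra hc
      have hv : P.IsInternalVertex (j + 1) :=
        Or.inl ⟨by omega, hjM, by simpa using (Ne.symm hc)⟩
      have := (hext _ hv).1
      push_cast at this hj
      omega
    have hl2 : P.l (j + 1) = P.l j := by
      by_contra hc
      have hv : P.IsInternalVertex (j + 1) :=
        Or.inr ⟨by omega, hjM, by simpa using (Ne.symm hc)⟩
      have := (hext _ hv).1
      push_cast at this hj
      omega
    exact ⟨by rw [hr2, hr], by rw [hl2, hl]⟩

lemma const_bot (P : HTransverse) {δ : ℕ} (hext : P.ExtremalGE (δ : ℤ)) :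
    ∀ j : ℕ, (P.M : ℤ) - (δ : ℤ) ≤ (j : ℤ) → j < P.M →
      P.r j = P.r (P.M - 1) ∧ P.l j = P.l (P.M - 1) := by
  have key : ∀ t j, P.M - 1 - j = t → (P.M : ℤ) - (δ : ℤ) ≤ (j : ℤ) → j < P.M →
      P.r j = P.r (P.M - 1) ∧ P.l j = P.l (P.M - 1) := by
    intro t
    induction t with
    | zero =>
      intro j h0 _ hjM
      have : j = P.M - 1 := by omega
      rw [this]
      exact ⟨rfl, rfl⟩
    | succ t ih =>
      intro j h0 hge hjM
      have hj1 : j + 1 < P.M := by omega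
      have hr : P.r j = P.r (j + 1) := by
        by_contra hc
        have hv : P.IsInternalVertex (j + 1) := Or.inl ⟨by omega, hj1, by simpa using hc⟩
        have := (hext _ hv).2
        push_cast at this hge
        omega
      have hl : P.l j = P.l (j + 1) := by
        by_contra hc
        have hv : P.IsInternalVertex (j + 1) := Or.inr ⟨by omega, hj1, by simpa using hc⟩
        have := (hext _ hv).2
        push_cast at this hge
        omega
      obtain ⟨hr2, hl2⟩ := ih (j + 1) (by omega) (by push_cast at hge ⊢; omega) hj1
      exact ⟨by rw [hr, hr2], by rw [hl, hl2]⟩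
  intro j hge hjM
  exact key (P.M - 1 - j) j rfl hge hjM

lemma vertex_or_const (P : HTransverse) :
    (∃ N, P.IsInternalVertex N) ∨ ∀ j, j < P.M → P.r j = P.r 0 ∧ P.l j = P.l 0 := by
  by_cases h : ∃ N, P.IsInternalVertex N
  · exact Or.inl h
  · right
    push_neg at h
    intro j
    induction j with
    | zero => exact fun _ => ⟨rfl, rfl⟩
    | succ j ih =>
      intro hj
      obtain ⟨hr, hl⟩ := ih (by omega)
      have hr2 : P.r (j + 1) = P.r j := by
        by_contra hc
        exact h (j + 1) (Or.inl ⟨by omega, hj, by simpa using (Ne.symm hc)⟩)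
      have hl2 : P.l (j + 1) = P.l j := by
        by_contra hc
        exact h (j + 1) (Or.inr ⟨by omega, hj, by simpa using (Ne.symm hc)⟩)
      exact ⟨by rw [hr2, hr], by rw [hl2, hl]⟩

lemma exists_slope_ne (P : HTransverse)
    (hnc : ∃ i j, i ≤ P.M ∧ j ≤ P.M ∧ P.beta i ≠ P.beta j) :
    ∃ j, j < P.M ∧ P.r j - P.l j ≠ 0 := by
  by_contra h
  push_neg at h
  obtain ⟨i, j, hi, hj, hne⟩ := hnc
  apply hne
  have key : ∀ i, i ≤ P.M → P.beta i = P.dt := by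
    intro i hi
    rw [beta, betaOf]
    have hz : ∑ j ∈ Finset.range i, (P.r j - P.l j) = 0 :=
      Finset.sum_eq_zero fun x hx => h x (by have := Finset.mem_range.1 hx; omega)
    rw [hz]
    ring
  rw [key i hi, key j hj]

lemma beta_top_lin (P : HTransverse) {δ : ℕ} (hext : P.ExtremalGE (δ : ℤ)) {i : ℕ}
    (hi : (i : ℤ) ≤ (δ : ℤ)) (hiM : i ≤ P.M) :
    P.beta i = (P.dt : ℤ) + (i : ℤ) * (P.r 0 - P.l 0) := by
  rw [beta, betaOf]
  have hz : ∑ j ∈ Finset.range i, (P.r j - P.l j) = ∑ _j ∈ Finset.range i, (P.r 0 - P.l 0) := by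
    apply Finset.sum_congr rfl
    intro x hx
    have hx' := Finset.mem_range.1 hx
    obtain ⟨hr, hl⟩ := P.const_top hext x (by push_cast; omega) (by omega)
    rw [hr, hl]
  rw [hz, Finset.sum_const, Finset.card_range]
  push_cast
  ring

lemma beta_bot_lin (P : HTransverse) {δ : ℕ} (hext : P.ExtremalGE (δ : ℤ)) {i : ℕ}
    (hi : (P.M : ℤ) - (δ : ℤ) ≤ (i : ℤ)) (hiM : i ≤ P.M) :
    P.beta i = (P.db : ℤ) - ((P.M : ℤ) - (i : ℤ)) * (P.r (P.M - 1) - P.l (P.M - 1)) := by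
  have hsub := P.beta_sub hiM
  rw [P.beta_M] at hsub
  have hz : ∑ j ∈ Finset.Ico i P.M, (P.r j - P.l j)
      = ∑ _j ∈ Finset.Ico i P.M, (P.r (P.M - 1) - P.l (P.M - 1)) := by
    apply Finset.sum_congr rfl
    intro x hx
    obtain ⟨hx1, hx2⟩ := Finset.mem_Ico.1 hx
    obtain ⟨hr, hl⟩ := P.const_bot hext x (by push_cast at hi ⊢; omega) hx2
    rw [hr, hl]
  rw [hz, Finset.sum_const, Nat.card_Ico] at hsub
  have : ((P.M - i : ℕ) : ℤ) = (P.M : ℤ) - (i : ℤ) := by push_cast; omega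
  rw [nsmul_eq_mul, this] at hsub
  linarith

lemma beta_ge_min (P : HTransverse) {a i b : ℕ} (hai : a ≤ i) (hib : i ≤ b) (hbM : b ≤ P.M) :
    P.beta a ≤ P.beta i ∨ P.beta b ≤ P.beta i := by
  by_cases h : ∃ j, a ≤ j ∧ j < i ∧ P.r j - P.l j < 0
  · right
    obtain ⟨j0, hj0a, hj0i, hj0⟩ := h
    have hsub := P.beta_sub hib
    have hle : ∑ j ∈ Finset.Ico i b, (P.r j - P.l j) ≤ 0 := by
      apply Finset.sum_nonpos
      intro x hx
      obtain ⟨hx1, hx2⟩ := Finset.mem_Ico.1 hx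
      have := P.slope_anti (le_of_lt (lt_of_lt_of_le hj0i hx1)) (by omega)
      omega
    omega
  · left
    push_neg at h
    have hsub := P.beta_sub hai
    have hge : 0 ≤ ∑ j ∈ Finset.Ico a i, (P.r j - P.l j) := by
      apply Finset.sum_nonneg
      intro x hx
      obtain ⟨hx1, hx2⟩ := Finset.mem_Ico.1 hx
      exact h x hx1 hx2
    omega

lemma beta_ge_dt_add (P : HTransverse) (h : 1 ≤ P.r (P.M - 1) - P.l (P.M - 1)) {i : ℕ}
    (hi : i ≤ P.M) : (P.dt : ℤ) + (i : ℤ) ≤ P.beta i := by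
  have hsub := P.beta_sub (Nat.zero_le i)
  rw [P.beta_zero] at hsub
  have hge : (i : ℤ) ≤ ∑ j ∈ Finset.Ico 0 i, (P.r j - P.l j) := by
    calc (i : ℤ) = (Finset.Ico 0 i).card • (1 : ℤ) := by simp
      _ ≤ _ := by
        apply Finset.card_nsmul_le_sum
        intro x hx
        obtain ⟨_, hx2⟩ := Finset.mem_Ico.1 hx
        have := P.slope_anti (by omega : x ≤ P.M - 1) (by omega)
        omega
  omega

lemma beta_ge_db_add (P : HTransverse) (h : P.r 0 - P.l 0 ≤ -1) {i : ℕ}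
    (hi : i ≤ P.M) : (P.db : ℤ) + ((P.M : ℤ) - (i : ℤ)) ≤ P.beta i := by
  have hsub := P.beta_sub hi
  rw [P.beta_M] at hsub
  have hge : ∑ j ∈ Finset.Ico i P.M, (P.r j - P.l j) ≤ -((P.M : ℤ) - (i : ℤ)) := by
    calc ∑ j ∈ Finset.Ico i P.M, (P.r j - P.l j)
        ≤ (Finset.Ico i P.M).card • (-1 : ℤ) := by
          apply Finset.sum_le_card_nsmul
          intro x hx
          obtain ⟨hx1, hx2⟩ := Finset.mem_Ico.1 hx
          have := P.slope_anti (Nat.zero_le x) hx2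
          omega
      _ = -((P.M : ℤ) - (i : ℤ)) := by
          rw [Nat.card_Ico, nsmul_eq_mul]
          push_cast
          omega
  omega

lemma beta_mid (P : HTransverse) {δ : ℕ} (hext : P.ExtremalGE (δ : ℤ))
    (hnc : ∃ i j, i ≤ P.M ∧ j ≤ P.M ∧ P.beta i ≠ P.beta j) {i : ℕ}
    (h1 : (δ : ℤ) ≤ (i : ℤ)) (h2 : (i : ℤ) ≤ (P.M : ℤ) - (δ : ℤ)) :
    (δ : ℤ) ≤ P.beta i := by
  obtain ⟨j0, hj0M, hj0⟩ := P.exists_slope_ne hnc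
  have hδi : δ ≤ i := by omega
  have hiMδ : i ≤ P.M - δ := by omega
  have hδM : δ ≤ P.M := by omega
  have hMδM : P.M - δ ≤ P.M := by omega
  rcases le_or_gt 1 (P.r 0 - P.l 0) with hs0 | hs0
  · -- top slope positive
    have hβδ : (δ : ℤ) ≤ P.beta δ := by
      have := P.beta_top_lin hext (le_refl (δ : ℤ)) hδM
      nlinarith [this, Nat.cast_nonneg P.dt (α := ℤ)]
    rcases le_or_gt (P.r (P.M - 1) - P.l (P.M - 1)) (-1) with hsM | hsM
    · have hβMδ : (δ : ℤ) ≤ P.beta (P.M - δ) := by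
        have hb := P.beta_bot_lin hext (by push_cast; omega) hMδM
        have hcast : ((P.M - δ : ℕ) : ℤ) = (P.M : ℤ) - (δ : ℤ) := by push_cast; omega
        rw [hcast] at hb
        nlinarith [Nat.cast_nonneg P.db (α := ℤ)]
      rcases P.beta_ge_min hδi hiMδ hMδM with h | h
      · omega
      · omega
    · -- bottom slope ≥ 0 : β nondecreasing from δ
      have hβδ' : P.beta δ ≤ P.beta i := by
        have hsub := P.beta_sub hδi
        have hge : 0 ≤ ∑ j ∈ Finset.Ico δ i, (P.r j - P.l j) := by
          apply Finset.sum_nonneg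
          intro x hx
          obtain ⟨hx1, hx2⟩ := Finset.mem_Ico.1 hx
          have := P.slope_anti (by omega : x ≤ P.M - 1) (by omega)
          omega
        omega
      omega
  · -- top slope ≤ 0 : all slopes ≤ 0, and some slope ≤ -1
    have hall : ∀ x, x < P.M → P.r x - P.l x ≤ 0 := by
      intro x hx
      have := P.slope_anti (Nat.zero_le x) hx
      omega
    have hsM : P.r (P.M - 1) - P.l (P.M - 1) ≤ -1 := by
      have h1' := P.slope_anti (by omega : j0 ≤ P.M - 1) (by omega)
      have h2' := hall j0 hj0M
      omega
    have hβMδ : (δ : ℤ) ≤ P.beta (P.M - δ) := by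
      have hb := P.beta_bot_lin hext (by push_cast; omega) hMδM
      have hcast : ((P.M - δ : ℕ) : ℤ) = (P.M : ℤ) - (δ : ℤ) := by push_cast; omega
      rw [hcast] at hb
      nlinarith [Nat.cast_nonneg P.db (α := ℤ)]
    have hmono : P.beta (P.M - δ) ≤ P.beta i := by
      have hsub := P.beta_sub hiMδ
      have hle : ∑ j ∈ Finset.Ico i (P.M - δ), (P.r j - P.l j) ≤ 0 := by
        apply Finset.sum_nonpos
        intro x hx
        obtain ⟨hx1, hx2⟩ := Finset.mem_Ico.1 hx
        exact hall x (by omega)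
      omega
    omega

end HTransverse
set_option maxHeartbeats 1000000 in
open LongEdgeGraph in
lemma key_ineq (δ : ℕ) (hδ : 1 ≤ δ) (P : HTransverse)
    (hnc : ∃ i j, i ≤ P.M ∧ j ≤ P.M ∧ P.beta i ≠ P.beta j)
    (hext : P.ExtremalGE (δ : ℤ))
    (Γ : LongEdgeGraph) (hΓ : Γ.IsTemplate) (ℓ : ℕ) (hlen : Γ.lengthG = ℓ)
    (hcog : Γ.cogenus = δ) (k i : ℕ)
    (HA : (δ : ℤ) + (Γ.eps1 : ℤ) ≤ (ℓ : ℤ) - 1 + (k : ℤ) ∨ (δ : ℤ) ≤ (P.dt : ℤ))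
    (HB : (k : ℤ) ≤ (P.M : ℤ) - (δ : ℤ) - (Γ.eps0 : ℤ) ∨ (δ : ℤ) ≤ (P.db : ℤ))
    (hik : k ≤ i) (hil : i < k + ℓ) (hiM : i ≤ P.M) :
    (Γ.lambar (i + 1 - k) : ℤ) ≤ P.beta i := by
  have hne : Γ.edges ≠ 0 := Γ.edges_ne_zero (by omega)
  have hmin := hΓ.1
  have htpl := hΓ.2
  have hmaxv : Γ.maxv = ℓ := by
    rw [← hlen, lengthG, hmin]
    omega
  set j' := i + 1 - k with hj'
  have hj'1 : 1 ≤ j' := by omega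
  have hj'ℓ : j' ≤ ℓ := by omega
  have hF1 : Γ.lambar j' + (i - k) ≤ δ + Γ.eps0 := by
    have := Γ.lambar_add_le_eps0 hmin htpl hne j' hj'1 (by omega)
    rw [hcog] at this
    omega
  have hF2 : Γ.lambar j' + ℓ + k ≤ δ + Γ.eps1 + i + 1 := by
    have := Γ.lambar_add_le_eps1 hmin htpl hne j' hj'1 (by omega)
    rw [hcog, hmaxv] at this
    omega
  have hL1 : Γ.lambar j' ≤ δ := by
    have := Γ.lambar_le_cogenus j'
    omega
  have hF1z : (Γ.lambar j' : ℤ) + ((i : ℤ) - (k : ℤ)) ≤ (δ : ℤ) + (Γ.eps0 : ℤ) := by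
    zify [hik] at hF1
    omega
  have hF2z : (Γ.lambar j' : ℤ) + (ℓ : ℤ) + (k : ℤ) ≤ (δ : ℤ) + (Γ.eps1 : ℤ) + (i : ℤ) + 1 := by
    exact_mod_cast hF2
  have hL1z : (Γ.lambar j' : ℤ) ≤ (δ : ℤ) := by exact_mod_cast hL1
  have hdtnn : (0 : ℤ) ≤ (P.dt : ℤ) := Int.natCast_nonneg _
  have hdbnn : (0 : ℤ) ≤ (P.db : ℤ) := Int.natCast_nonneg _
  have hinn : (0 : ℤ) ≤ (i : ℤ) := Int.natCast_nonneg _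
  have hiMz : (i : ℤ) ≤ (P.M : ℤ) := by exact_mod_cast hiM
  rcases lt_or_ge (i : ℤ) (δ : ℤ) with htop | hge
  · -- TOP region
    have hlin := P.beta_top_lin hext (le_of_lt htop) hiM
    rcases le_or_gt 1 (P.r 0 - P.l 0) with hs0 | hs0
    · have hbi : (P.dt : ℤ) + (i : ℤ) ≤ P.beta i := by nlinarith
      rcases HA with HA | HA
      · linarith
      · nlinarith
    · -- top slope ≤ 0
      have hs0' : P.r 0 - P.l 0 ≤ 0 := by omega
      obtain ⟨j0, hj0M, hj0⟩ := P.exists_slope_ne hnc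
      rcases P.vertex_or_const with ⟨N, hN⟩ | hconst
      · -- there is a vertex, so M ≥ 2δ
        obtain ⟨hN1, hN2⟩ := hext N hN
        have hM2δ : 2 * (δ : ℤ) ≤ (P.M : ℤ) := by omega
        have hiMδ : i ≤ P.M - δ := by omega
        have hβMδ : (δ : ℤ) ≤ P.beta (P.M - δ) :=
          P.beta_mid hext hnc (by push_cast; omega) (by push_cast; omega)
        have hmono : P.beta (P.M - δ) ≤ P.beta i := by
          have hsub := P.beta_sub hiMδ
          have hle : ∑ j ∈ Finset.Ico i (P.M - δ), (P.r j - P.l j) ≤ 0 := by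
            apply Finset.sum_nonpos
            intro x hx
            obtain ⟨hx1, hx2⟩ := Finset.mem_Ico.1 hx
            have := P.slope_anti (Nat.zero_le x) (by omega)
            omega
          omega
        linarith
      · -- no vertex: all slopes equal s0 ≤ -1
        have hs0n : P.r 0 - P.l 0 ≤ -1 := by
          obtain ⟨hr, hl⟩ := hconst j0 hj0M
          rw [hr, hl] at hj0
          omega
        have hbi := P.beta_ge_db_add hs0n hiM
        rcases HB with HB | HB
        · linarith
        · linarith
  · rcases le_or_gt (i : ℤ) ((P.M : ℤ) - (δ : ℤ)) with hmid | hbot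
    · -- MIDDLE region
      have := P.beta_mid hext hnc hge hmid
      linarith
    · -- BOTTOM region
      have hlin := P.beta_bot_lin hext (le_of_lt hbot) hiM
      rcases le_or_gt (P.r (P.M - 1) - P.l (P.M - 1)) (-1) with hsM | hsM
      · have hbi : (P.db : ℤ) + ((P.M : ℤ) - (i : ℤ)) ≤ P.beta i := by nlinarith
        rcases HB with HB | HB
        · linarith
        · linarith
      · rcases le_or_gt 1 (P.r (P.M - 1) - P.l (P.M - 1)) with hsM1 | hsM1
        · have hbi := P.beta_ge_dt_add hsM1 hiM
          rcases HA with HA | HA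
          · linarith
          · linarith
        · -- bottom slope = 0
          have hsM0 : P.r (P.M - 1) - P.l (P.M - 1) = 0 := by omega
          obtain ⟨j0, hj0M, hj0⟩ := P.exists_slope_ne hnc
          rcases P.vertex_or_const with ⟨N, hN⟩ | hconst
          · obtain ⟨hN1, hN2⟩ := hext N hN
            have hM2δ : 2 * (δ : ℤ) ≤ (P.M : ℤ) := by omega
            have hδi : δ ≤ i := by omega
            have hβδ : (δ : ℤ) ≤ P.beta δ :=
              P.beta_mid hext hnc (by push_cast; omega) (by push_cast; omega)
            have hmono : P.beta δ ≤ P.beta i := by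
              have hsub := P.beta_sub hδi
              have hge2 : 0 ≤ ∑ j ∈ Finset.Ico δ i, (P.r j - P.l j) := by
                apply Finset.sum_nonneg
                intro x hx
                obtain ⟨hx1, hx2⟩ := Finset.mem_Ico.1 hx
                have := P.slope_anti (by omega : x ≤ P.M - 1) (by omega)
                omega
              omega
            linarith
          · exfalso
            obtain ⟨hr0, hl0⟩ := hconst j0 hj0M
            obtain ⟨hrM, hlM⟩ := hconst (P.M - 1) (by have := P.M_pos; omega)
            rw [hr0, hl0] at hj0
            rw [hrM, hlM] at hsM0
            exact hj0 hsM0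
set_option maxHeartbeats 1000000 in
open LongEdgeGraph in
lemma semi_main (δ : ℕ) (hδ : 1 ≤ δ) (P : HTransverse)
    (hnc : ∃ i j, i ≤ P.M ∧ j ≤ P.M ∧ P.beta i ≠ P.beta j)
    (hext : P.ExtremalGE (δ : ℤ))
    (β : ℕ → ℤ) (hβnn : ∀ i, i ≤ P.M → 0 ≤ β i)
    (hβeq : ∀ i, i ≤ P.M → ((i : ℤ) ≤ (δ : ℤ) ∨ (P.M : ℤ) - (δ : ℤ) ≤ (i : ℤ)) →
      β i = P.beta i)
    (hβge : ∀ i, i ≤ P.M → (δ : ℤ) < (i : ℤ) → (i : ℤ) < (P.M : ℤ) - (δ : ℤ) →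
      (δ : ℤ) ≤ β i)
    (Γ : LongEdgeGraph) (hΓ : Γ.IsTemplate) (ℓ : ℕ) (hlen : Γ.lengthG = ℓ)
    (hcog : Γ.cogenus = δ) (k : ℕ)
    (HA : (δ : ℤ) + (Γ.eps1 : ℤ) ≤ (ℓ : ℤ) - 1 + (k : ℤ) ∨ (δ : ℤ) ≤ (P.dt : ℤ))
    (HB : (k : ℤ) ≤ (P.M : ℤ) - (δ : ℤ) - (Γ.eps0 : ℤ) ∨ (δ : ℤ) ≤ (P.db : ℤ))
    (K : k + ℓ ≤ P.M + 1) :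
    SemiallowableZ P.M β (Γ.shiftG k) ∧ SemiallowableZ P.M P.beta (Γ.shiftG k) := by
  have hne : Γ.edges ≠ 0 := Γ.edges_ne_zero (by omega)
  have hmin := hΓ.1
  have hmaxv : Γ.maxv = ℓ := by
    rw [← hlen, lengthG, hmin]
    omega
  have hmx : (Γ.shiftG k).maxv ≤ P.M + 1 := by
    have := Γ.maxv_shift_le k
    omega
  -- the main pointwise bound against `P.beta`
  have hkey : ∀ j, 1 ≤ j → j ≤ P.M + 1 → ((Γ.shiftG k).lambar j : ℤ) ≤ P.beta (j - 1) := by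
    intro j hj1 hjM
    by_cases hjk : j ≤ k
    · rw [Γ.lambar_shift_of_le k hjk]
      simpa using P.beta_nonneg (show j - 1 ≤ P.M by omega)
    · push_neg at hjk
      have hsh : (Γ.shiftG k).lambar j = Γ.lambar (j - k) := by
        rcases Γ.lambar_shift k (j - k) with h | h
        · rw [← h]
          congr 1
          omega
        · omega
      rw [hsh]
      by_cases hjl : ℓ < j - k
      · rw [Γ.lambar_eq_zero_of_gt (show Γ.maxv < j - k by omega)]
        simpa using P.beta_nonneg (show j - 1 ≤ P.M by omega)
      · push_neg at hjl
        have hkk := key_ineq δ hδ P hnc hext Γ hΓ ℓ hlen hcog k (j - 1) HA HB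
          (by omega) (by omega) (by omega)
        have heq : (j - 1) + 1 - k = j - k := by omega
        rw [heq] at hkk
        exact hkk
  refine ⟨⟨hmx, ?_⟩, ⟨hmx, fun j hj1 hjM => hkey j hj1 hjM⟩⟩
  intro j hj1 hjM
  have hj1M : j - 1 ≤ P.M := by omega
  by_cases hcase : ((j - 1 : ℕ) : ℤ) ≤ (δ : ℤ) ∨ (P.M : ℤ) - (δ : ℤ) ≤ ((j - 1 : ℕ) : ℤ)
  · rw [hβeq _ hj1M hcase]
    exact hkey j hj1 hjM
  · push_neg at hcase
    have hge := hβge (j - 1) hj1M (by omega) (by omega)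
    have hlam : ((Γ.shiftG k).lambar j : ℤ) ≤ (δ : ℤ) := by
      by_cases hjk : j ≤ k
      · rw [Γ.lambar_shift_of_le k hjk]
        positivity
      · push_neg at hjk
        have hsh : (Γ.shiftG k).lambar j = Γ.lambar (j - k) := by
          rcases Γ.lambar_shift k (j - k) with h | h
          · rw [← h]
            congr 1
            omega
          · omega
        rw [hsh]
        have := Γ.lambar_le_cogenus (j - k)
        rw [hcog] at this
        exact_mod_cast this
    linarith

set_option maxHeartbeats 1000000 in
open LongEdgeGraph in
theorem shifted_template_semiallowable' (δ : ℕ) (hδ : 1 ≤ δ) (P : HTransverse)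
    (hnc : ∃ i j, i ≤ P.M ∧ j ≤ P.M ∧ P.beta i ≠ P.beta j)
    (hext : P.ExtremalGE (δ : ℤ))
    (β : ℕ → ℤ) (hβnn : ∀ i, i ≤ P.M → 0 ≤ β i)
    (hβeq : ∀ i, i ≤ P.M → ((i : ℤ) ≤ (δ : ℤ) ∨ (P.M : ℤ) - (δ : ℤ) ≤ (i : ℤ)) →
      β i = P.beta i)
    (hβge : ∀ i, i ≤ P.M → (δ : ℤ) < (i : ℤ) → (i : ℤ) < (P.M : ℤ) - (δ : ℤ) →
      (δ : ℤ) ≤ β i)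
    (Γ : LongEdgeGraph) (hΓ : Γ.IsTemplate) (ℓ : ℕ) (hlen : Γ.lengthG = ℓ)
    (hcog : Γ.cogenus = δ) :
    (∀ k : ℕ, (δ : ℤ) + (Γ.eps1 : ℤ) ≤ (ℓ : ℤ) - 1 + (k : ℤ) →
        (k : ℤ) ≤ (P.M : ℤ) - (δ : ℤ) - (Γ.eps0 : ℤ) →
      SemiallowableZ P.M β (Γ.shiftG k) ∧ SemiallowableZ P.M P.beta (Γ.shiftG k)) ∧
    ((δ : ℤ) ≤ (P.dt : ℤ) →
      ∀ k : ℕ, (k : ℤ) ≤ (P.M : ℤ) - (δ : ℤ) - (Γ.eps0 : ℤ) →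
      SemiallowableZ P.M β (Γ.shiftG k) ∧ SemiallowableZ P.M P.beta (Γ.shiftG k)) ∧
    ((δ : ℤ) ≤ (P.db : ℤ) →
      ∀ k : ℕ, (δ : ℤ) + (Γ.eps1 : ℤ) ≤ (ℓ : ℤ) - 1 + (k : ℤ) →
        (ℓ : ℤ) - 1 + (k : ℤ) ≤ (P.M : ℤ) →
      SemiallowableZ P.M β (Γ.shiftG k) ∧ SemiallowableZ P.M P.beta (Γ.shiftG k)) := by
  have hne : Γ.edges ≠ 0 := Γ.edges_ne_zero (by omega)
  have hmin := hΓ.1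
  have htpl := hΓ.2
  have hmaxv : Γ.maxv = ℓ := by
    rw [← hlen, lengthG, hmin]
    omega
  have hl1 : 1 ≤ ℓ := by
    have := Γ.one_le_maxv hne hmin
    omega
  have hlle : ℓ ≤ δ + Γ.eps0 := by
    have h1 := Γ.lambar_add_le_eps0 hmin htpl hne ℓ hl1 (by omega)
    have h2 := Γ.one_le_lambar hmin htpl hne hl1 (le_of_eq hmaxv.symm)
    rw [hcog] at h1
    omega
  refine ⟨?_, ?_, ?_⟩
  · intro k hk1 hk2
    have hK : k + ℓ ≤ P.M + 1 := by
      have he0 := Γ.eps0_le_one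
      omega
    exact semi_main δ hδ P hnc hext β hβnn hβeq hβge Γ hΓ ℓ hlen hcog k
      (Or.inl hk1) (Or.inl hk2) hK
  · intro hdt k hk2
    have hK : k + ℓ ≤ P.M + 1 := by
      have he0 := Γ.eps0_le_one
      omega
    exact semi_main δ hδ P hnc hext β hβnn hβeq hβge Γ hΓ ℓ hlen hcog k
      (Or.inr hdt) (Or.inl hk2) hK
  · intro hdb k hk1 hk2
    have hK : k + ℓ ≤ P.M + 1 := by omega
    exact semi_main δ hδ P hnc hext β hβnn hβeq hβge Γ hΓ ℓ hlen hcog k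
      (Or.inl hk1) (Or.inr hdb) hK
/-- let `δ ≥ 1` and let `Δ` be an h-transverse polygon of height `M` with
nonconstant width sequence `β(Δ)`, all of whose extremal edges have length at least `δ`.
Let `β ∈ ℤ_{≥0}^{M+1}` satisfy `β_i = β_i(Δ)` for `i ≤ δ` or `i ≥ M − δ`, and `β_i ≥ δ` for
`δ < i < M − δ`.  Let `Γ` be a template of length `ℓ` and cogenus `δ`.  Then for every
`k ≥ 0` with `δ + ε_1(Γ) ≤ ℓ − 1 + k` and `k ≤ M − δ − ε_0(Γ)`, the shift `Γ_{(k)}` is both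
`β`-semiallowable and `β(Δ)`-semiallowable; if moreover `d^t ≥ δ` (resp. `d^b ≥ δ`), the
same holds whenever `0 ≤ k ≤ M − δ − ε_0(Γ)` (resp. whenever
`δ + ε_1(Γ) ≤ ℓ − 1 + k ≤ M`). -/
theorem shifted_template_semiallowable (δ : ℕ) (hδ : 1 ≤ δ) (P : HTransverse)
    (hnc : ∃ i j, i ≤ P.M ∧ j ≤ P.M ∧ P.beta i ≠ P.beta j)
    (hext : P.ExtremalGE (δ : ℤ))
    (β : ℕ → ℤ) (hβnn : ∀ i, i ≤ P.M → 0 ≤ β i)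
    (hβeq : ∀ i, i ≤ P.M → ((i : ℤ) ≤ (δ : ℤ) ∨ (P.M : ℤ) - (δ : ℤ) ≤ (i : ℤ)) →
      β i = P.beta i)
    (hβge : ∀ i, i ≤ P.M → (δ : ℤ) < (i : ℤ) → (i : ℤ) < (P.M : ℤ) - (δ : ℤ) →
      (δ : ℤ) ≤ β i)
    (Γ : LongEdgeGraph) (hΓ : Γ.IsTemplate) (ℓ : ℕ) (hlen : Γ.lengthG = ℓ)
    (hcog : Γ.cogenus = δ) :
    (∀ k : ℕ, (δ : ℤ) + (Γ.eps1 : ℤ) ≤ (ℓ : ℤ) - 1 + (k : ℤ) →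
        (k : ℤ) ≤ (P.M : ℤ) - (δ : ℤ) - (Γ.eps0 : ℤ) →
      SemiallowableZ P.M β (Γ.shiftG k) ∧ SemiallowableZ P.M P.beta (Γ.shiftG k)) ∧
    ((δ : ℤ) ≤ (P.dt : ℤ) →
      ∀ k : ℕ, (k : ℤ) ≤ (P.M : ℤ) - (δ : ℤ) - (Γ.eps0 : ℤ) →
      SemiallowableZ P.M β (Γ.shiftG k) ∧ SemiallowableZ P.M P.beta (Γ.shiftG k)) ∧
    ((δ : ℤ) ≤ (P.db : ℤ) →
      ∀ k : ℕ, (δ : ℤ) + (Γ.eps1 : ℤ) ≤ (ℓ : ℤ) - 1 + (k : ℤ) →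
        (ℓ : ℤ) - 1 + (k : ℤ) ≤ (P.M : ℤ) →
      SemiallowableZ P.M β (Γ.shiftG k) ∧ SemiallowableZ P.M P.beta (Γ.shiftG k)) := by
  exact shifted_template_semiallowable' δ hδ P hnc hext β hβnn hβeq hβge Γ hΓ ℓ hlen hcog
end

section
/- In the ring of formal power series ℚ[[x]], the logarithm of the partition generating function satisfies log(∑_{n ≥ 0} p(n) x^n) = ∑_{n ≥ 1} (σ(n)/n) x^n, where σ(n) = ∑_{d | n} d; equivalently, log(∏_{i ≥ 1} (1 − x^i)^{−1}) = ∑_{n ≥ 1} (σ(n)/n) x^n. -/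
open PowerSeries

open Finset

/-- Removing/adding `m` copies of `d` gives a bijection between partitions of `N` containing
at least `m` copies of `d` and partitions of `N - d*m`. -/
noncomputable def partEquiv (N d m : ℕ) (hd : 0 < d) (h : d * m ≤ N) :
    {l : N.Partition // Multiset.replicate m d ≤ l.parts} ≃ (N - d * m).Partition where
  toFun l := ⟨l.1.parts - Multiset.replicate m d,
    fun hi => l.1.parts_pos (Multiset.mem_of_le (Multiset.sub_le_self _ _) hi), by
      have h1 : (l.1.parts - Multiset.replicate m d).sum + (Multiset.replicate m d).sum
          = l.1.parts.sum := by
        rw [← Multiset.sum_add, tsub_add_cancel_of_le l.2]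
      rw [Multiset.sum_replicate, l.1.parts_sum, smul_eq_mul, mul_comm m d] at h1
      omega⟩
  invFun u := ⟨⟨u.parts + Multiset.replicate m d, by
      intro i hi
      rcases Multiset.mem_add.1 hi with h' | h'
      · exact u.parts_pos h'
      · rw [Multiset.eq_of_mem_replicate h']; exact hd, by
      rw [Multiset.sum_add, u.parts_sum, Multiset.sum_replicate, smul_eq_mul, mul_comm m d]
      omega⟩, Multiset.le_add_left _ _⟩
  left_inv l := by
    ext1
    exact Nat.Partition.ext (tsub_add_cancel_of_le l.2)
  right_inv u := Nat.Partition.ext (by simp [add_tsub_cancel_right])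

lemma sum_le_of_le {s t : Multiset ℕ} (h : s ≤ t) : s.sum ≤ t.sum := by
  obtain ⟨u, rfl⟩ := Multiset.le_iff_exists_add.1 h
  simp

lemma card_filter_count (N d m : ℕ) (hd : 0 < d) :
    (univ.filter fun l : N.Partition => m ≤ l.parts.count d).card
      = if d * m ≤ N then Fintype.card ((N - d * m).Partition) else 0 := by
  split_ifs with h
  · rw [← Fintype.card_subtype]
    refine Fintype.card_congr ((Equiv.subtypeEquivRight ?_).trans (partEquiv N d m hd h))
    intro l
    exact Multiset.le_count_iff_replicate_le
  · rw [Finset.card_eq_zero, Finset.filter_eq_empty_iff]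
    intro l _ hc
    have h1 : Multiset.replicate m d ≤ l.parts := Multiset.le_count_iff_replicate_le.1 hc
    have h2 := sum_le_of_le h1
    rw [Multiset.sum_replicate, l.parts_sum, smul_eq_mul, mul_comm m d] at h2
    omega

lemma sum_Icc_count (N : ℕ) (l : N.Partition) :
    ∑ d ∈ Icc 1 N, d * l.parts.count d = N := by
  classical
  have key : ∑ d ∈ l.parts.toFinset, d * Multiset.count d l.parts = N := by
    have h := Finset.sum_multiset_map_count l.parts id
    rw [Multiset.map_id, l.parts_sum] at h
    conv_rhs => rw [h]
    exact Finset.sum_congr rfl fun d _ => by rw [smul_eq_mul, id_eq, mul_comm]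
  have sub : l.parts.toFinset ⊆ Icc 1 N := by
    intro d hd
    rw [Multiset.mem_toFinset] at hd
    obtain ⟨t, ht⟩ := Multiset.exists_cons_of_mem hd
    refine mem_Icc.2 ⟨l.parts_pos hd, ?_⟩
    have : l.parts.sum = d + t.sum := by rw [ht, Multiset.sum_cons]
    rw [l.parts_sum] at this
    omega
  conv_rhs => rw [← key]
  refine (Finset.sum_subset sub fun d _ hd => ?_).symm
  rw [Multiset.count_eq_zero_of_notMem (by simpa using hd), mul_zero]

lemma key_identity (N : ℕ) :
    N * Fintype.card N.Partition
      = ∑ k ∈ Icc 1 N, (∑ d ∈ k.divisors, d) * Fintype.card ((N - k).Partition) := by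
  classical
  have step1 : N * Fintype.card N.Partition
      = ∑ l : N.Partition, ∑ d ∈ Icc 1 N, d * l.parts.count d := by
    rw [Finset.sum_congr rfl fun l _ => sum_Icc_count N l]
    simp [mul_comm]
  rw [step1, Finset.sum_comm]
  -- now : ∑ d ∈ Icc 1 N, ∑ l, d * count d l.parts
  have step2 : ∀ d ∈ Icc 1 N, ∑ l : N.Partition, d * l.parts.count d
      = ∑ m ∈ Icc 1 N, d * (if d * m ≤ N then Fintype.card ((N - d * m).Partition) else 0) := by
    intro d hd
    rw [mem_Icc] at hd
    have hcount : ∀ l : N.Partition, l.parts.count d ≤ N := by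
      intro l
      have h1 : Multiset.replicate (l.parts.count d) d ≤ l.parts :=
        Multiset.le_count_iff_replicate_le.1 le_rfl
      have h2 := sum_le_of_le h1
      rw [Multiset.sum_replicate, l.parts_sum, smul_eq_mul] at h2
      nlinarith [hd.1]
    have inner : ∀ l : N.Partition, l.parts.count d
        = ∑ m ∈ Icc 1 N, (if m ≤ l.parts.count d then 1 else 0) := by
      intro l
      rw [← Finset.sum_filter]
      have : Finset.filter (fun m => m ≤ l.parts.count d) (Icc 1 N)
          = Icc 1 (l.parts.count d) := by
        ext m
        simp only [mem_filter, mem_Icc]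
        have := hcount l
        omega
      simp [this]
    calc ∑ l : N.Partition, d * l.parts.count d
        = ∑ l : N.Partition, ∑ m ∈ Icc 1 N, d * (if m ≤ l.parts.count d then 1 else 0) := by
          refine Finset.sum_congr rfl fun l _ => ?_
          rw [← Finset.mul_sum, ← inner l]
      _ = ∑ m ∈ Icc 1 N, ∑ l : N.Partition, d * (if m ≤ l.parts.count d then 1 else 0) :=
          Finset.sum_comm
      _ = ∑ m ∈ Icc 1 N, d * (if d * m ≤ N then Fintype.card ((N - d * m).Partition) else 0) := by
          refine Finset.sum_congr rfl fun m _ => ?_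
          rw [← Finset.mul_sum]
          congr 1
          rw [← card_filter_count N d m (by omega)]
          rw [Finset.card_eq_sum_ones, Finset.sum_filter]
  rw [Finset.sum_congr rfl step2]
  have lhs_eq : (∑ d ∈ Icc 1 N, ∑ m ∈ Icc 1 N,
        d * (if d * m ≤ N then Fintype.card ((N - d * m).Partition) else 0))
      = ∑ p ∈ (Icc 1 N ×ˢ Icc 1 N).filter (fun p => p.1 * p.2 ≤ N),
          p.1 * Fintype.card ((N - p.1 * p.2).Partition) := by
    rw [Finset.sum_filter, Finset.sum_product]
    simp [mul_ite]
  have rhs_eq : (∑ k ∈ Icc 1 N, (∑ d ∈ k.divisors, d) * Fintype.card ((N - k).Partition))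
      = ∑ x ∈ (Icc 1 N).sigma (fun k => k.divisors),
          x.2 * Fintype.card ((N - x.1).Partition) := by
    rw [Finset.sum_sigma]
    refine Finset.sum_congr rfl fun k _ => ?_
    rw [Finset.sum_mul]
  rw [lhs_eq, rhs_eq]
  refine Finset.sum_nbij' (fun p => ⟨p.1 * p.2, p.1⟩) (fun x => (x.2, x.1 / x.2))
    ?_ ?_ ?_ ?_ ?_
  · rintro ⟨d, m⟩ hp
    simp only [mem_filter, mem_product, mem_Icc] at hp
    obtain ⟨⟨⟨hd1, hdN⟩, hm1, hmN⟩, hle⟩ := hp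
    simp only [Finset.mem_sigma, mem_Icc, Nat.mem_divisors]
    refine ⟨⟨?_, hle⟩, dvd_mul_right d m, Nat.mul_ne_zero (by omega) (by omega)⟩
    exact Nat.one_le_iff_ne_zero.2 (Nat.mul_ne_zero (by omega) (by omega))
  · rintro ⟨k, d⟩ hx
    simp only [Finset.mem_sigma, mem_Icc, Nat.mem_divisors] at hx
    obtain ⟨⟨hk1, hkN⟩, hdk, hk0⟩ := hx
    obtain ⟨m, rfl⟩ := hdk
    obtain ⟨hd0, hm0⟩ := Nat.mul_ne_zero_iff.1 hk0
    have hd : 0 < d := Nat.pos_of_ne_zero hd0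
    have hm : 0 < m := Nat.pos_of_ne_zero hm0
    simp only [mem_filter, mem_product, mem_Icc]
    rw [Nat.mul_div_cancel_left m hd]
    refine ⟨⟨⟨hd, ?_⟩, hm, ?_⟩, hkN⟩
    · exact le_trans (Nat.le_mul_of_pos_right d hm) hkN
    · exact le_trans (Nat.le_mul_of_pos_left m hd) hkN
  · rintro ⟨d, m⟩ hp
    simp only [mem_filter, mem_product, mem_Icc] at hp
    have hd : 0 < d := hp.1.1.1
    simp [Nat.mul_div_cancel_left m hd]
  · rintro ⟨k, d⟩ hx
    simp only [Finset.mem_sigma, mem_Icc, Nat.mem_divisors] at hx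
    obtain ⟨⟨hk1, hkN⟩, hdk, hk0⟩ := hx
    simp [Nat.mul_div_cancel' hdk]
  · rintro ⟨d, m⟩ _
    rfl


open Finset

/-- The formal logarithm of a power series `f` (with constant term `1`):
`log f = ∑_{k ≥ 1} (−1)^{k+1} (f − 1)^k / k`.  Since `f − 1` has positive order when the
constant term of `f` is `1`, the coefficient of `xⁿ` only receives contributions from
`k ≤ n`, which gives the coefficientwise formula below. -/
noncomputable def logPS (f : PowerSeries ℚ) : PowerSeries ℚ :=
  PowerSeries.mk fun n =>
    ∑ k ∈ Finset.Icc 1 n, ((-1 : ℚ) ^ (k + 1) / (k : ℚ)) * (PowerSeries.coeff (R := ℚ) n) ((f - 1) ^ k)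

lemma coeff_zero_pow_mul {g h : ℚ⟦X⟧} (hg : constantCoeff g = 0) {a k : ℕ} (hak : a < k) :
    coeff a (g ^ k * h) = 0 := by
  have hX : (X : ℚ⟦X⟧) ^ k ∣ g ^ k * h :=
    Dvd.dvd.mul_right (pow_dvd_pow_of_dvd (X_dvd_iff.2 hg) k) h
  exact X_pow_dvd_iff.1 hX a hak

lemma deriv_logPS_mul (f : ℚ⟦X⟧) (hf : constantCoeff f = 1) :
    d⁄dX ℚ (logPS f) * f = d⁄dX ℚ f := by
  set g : ℚ⟦X⟧ := f - 1 with hgdef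
  have hg : constantCoeff g = 0 := by simp [hgdef, hf]
  have hg' : constantCoeff (-g) = 0 := by simp [hg]
  have hDg : d⁄dX ℚ g = d⁄dX ℚ f := by
    rw [hgdef, map_sub]; simp
  ext N
  set T : ℚ⟦X⟧ := ∑ k ∈ Finset.Icc 1 (N + 1),
      C ((-1 : ℚ) ^ (k + 1)) * (g ^ (k - 1) * d⁄dX ℚ f) with hT
  have stepB : ∀ a ≤ N, coeff a (d⁄dX ℚ (logPS f)) = coeff a T := by
    intro a ha
    have h1 : coeff a (d⁄dX ℚ (logPS f))
        = ∑ k ∈ Finset.Icc 1 (a + 1),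
            (-1 : ℚ) ^ (k + 1) * coeff a (g ^ (k - 1) * d⁄dX ℚ f) := by
      rw [coeff_derivative, logPS, coeff_mk, Finset.sum_mul]
      refine Finset.sum_congr rfl fun k hk => ?_
      rw [Finset.mem_Icc] at hk
      have hk0 : (k : ℚ) ≠ 0 := Nat.cast_ne_zero.2 (by omega)
      have hpow : d⁄dX ℚ (g ^ k) = k • (g ^ (k - 1) * d⁄dX ℚ f) := by
        rw [Derivation.leibniz_pow, smul_eq_mul, hDg]
      have e1 : coeff (a + 1) (g ^ k) * ((a : ℚ) + 1)
          = (k : ℚ) * coeff a (g ^ (k - 1) * d⁄dX ℚ f) := by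
        rw [← coeff_derivative, hpow, map_nsmul, nsmul_eq_mul]
      rw [mul_assoc, e1, ← mul_assoc, div_mul_cancel₀ _ hk0]
    have h2 : coeff a T
        = ∑ k ∈ Finset.Icc 1 (N + 1),
            (-1 : ℚ) ^ (k + 1) * coeff a (g ^ (k - 1) * d⁄dX ℚ f) := by
      rw [hT, map_sum]
      exact Finset.sum_congr rfl fun k _ => by rw [coeff_C_mul]
    rw [h1, h2]
    refine Finset.sum_subset (Finset.Icc_subset_Icc_right (by omega)) fun k hk1 hk2 => ?_
    rw [Finset.mem_Icc] at hk1 hk2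
    rw [coeff_zero_pow_mul hg (by omega), mul_zero]
  have hTf : coeff N (d⁄dX ℚ (logPS f) * f) = coeff N (T * f) := by
    rw [coeff_mul, coeff_mul]
    refine Finset.sum_congr rfl fun p hp => ?_
    rw [Finset.HasAntidiagonal.mem_antidiagonal] at hp
    rw [stepB p.1 (by omega)]
  have hTform : T = (∑ j ∈ Finset.range (N + 1), (-g) ^ j) * d⁄dX ℚ f := by
    rw [hT, Finset.sum_mul, ← Finset.Ico_add_one_right_eq_Icc, Finset.sum_Ico_eq_sum_range]
    refine Finset.sum_congr (by norm_num) fun j _ => ?_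
    have c1 : ((-g) ^ j : ℚ⟦X⟧) = C ((-1 : ℚ) ^ (1 + j + 1)) * g ^ (1 + j - 1) := by
      rw [neg_pow]
      have : ((-1 : ℚ) ^ (1 + j + 1)) = (-1 : ℚ) ^ j := by
        rw [pow_add, pow_add]; ring
      rw [this]
      simp [map_pow]
    rw [c1, mul_assoc]
  have hgeom : (∑ j ∈ Finset.range (N + 1), (-g) ^ j) * f = 1 - (-g) ^ (N + 1) := by
    have hf1 : f = 1 + g := by rw [hgdef]; ring
    have hgs := geom_sum_mul (-g) (N + 1)
    rw [hf1]
    linear_combination -hgs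
  have hTf2 : T * f = (1 - (-g) ^ (N + 1)) * d⁄dX ℚ f := by
    rw [hTform, mul_right_comm, hgeom]
  rw [hTf, hTf2, sub_mul, one_mul, map_sub, coeff_zero_pow_mul hg' (by omega), sub_zero]


/-- The generating function `∑_{n ≥ 0} p(n) xⁿ` of the partition numbers. -/
noncomputable def partitionGF : PowerSeries ℚ :=
  PowerSeries.mk fun n => (Fintype.card (Nat.Partition n) : ℚ)

/-- in `ℚ[[x]]`, `log (∑_{n ≥ 0} p(n) xⁿ) = ∑_{n ≥ 1} (σ(n)/n) xⁿ`, where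
`σ(n) = ∑_{d ∣ n} d` (the `n = 0` coefficient of the right-hand side being `0`). -/
theorem log_partitionGF :
    logPS partitionGF = PowerSeries.mk fun n => (∑ d ∈ Nat.divisors n, (d : ℚ)) / (n : ℚ) := by
  set S : ℚ⟦X⟧ := PowerSeries.mk fun n => (∑ d ∈ Nat.divisors n, (d : ℚ)) / (n : ℚ) with hS
  have hf1 : constantCoeff partitionGF = 1 := by
    rw [partitionGF, ← coeff_zero_eq_constantCoeff, coeff_mk]
    simp
  have hfne : partitionGF ≠ 0 := fun h => by simp [h] at hf1
  have hDS : ∀ a : ℕ, coeff a (d⁄dX ℚ S) = ∑ d ∈ Nat.divisors (a + 1), (d : ℚ) := by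
    intro a
    rw [coeff_derivative, hS, coeff_mk]
    have ha : ((a : ℚ) + 1) ≠ 0 := by positivity
    rw [Nat.cast_add, Nat.cast_one, div_mul_cancel₀ _ ha]
  have key : ∀ n : ℕ, coeff n (d⁄dX ℚ S * partitionGF) = coeff n (d⁄dX ℚ partitionGF) := by
    intro n
    have hpc : ∀ b : ℕ, coeff b partitionGF = (Fintype.card (Nat.Partition b) : ℚ) := by
      intro b; rw [partitionGF, coeff_mk]
    rw [coeff_mul, coeff_derivative, hpc (n + 1)]
    have hterm : ∀ p ∈ Finset.HasAntidiagonal.antidiagonal n,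
        coeff p.1 (d⁄dX ℚ S) * coeff p.2 partitionGF
          = (∑ d ∈ Nat.divisors (p.1 + 1), (d : ℚ))
              * (Fintype.card (Nat.Partition p.2) : ℚ) := by
      intro p _
      rw [hDS p.1, hpc p.2]
    rw [Finset.sum_congr rfl hterm, Finset.Nat.sum_antidiagonal_eq_sum_range_succ_mk]
    have hkey := congrArg (Nat.cast : ℕ → ℚ) (key_identity (n + 1))
    push_cast at hkey
    rw [← Finset.Ico_add_one_right_eq_Icc, Finset.sum_Ico_eq_sum_range] at hkey
    norm_num at hkey
    calc ∑ i ∈ Finset.range (n + 1),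
            (∑ d ∈ Nat.divisors (i + 1), (d : ℚ)) * (Fintype.card (Nat.Partition (n - i)) : ℚ)
        = ∑ i ∈ Finset.range (n + 1),
            (∑ d ∈ Nat.divisors (1 + i), (d : ℚ)) * (Fintype.card (Nat.Partition (n + 1 - (1 + i))) : ℚ) := by
          refine Finset.sum_congr rfl fun i _ => ?_
          have h : n + 1 - (i + 1) = n - i := by omega
          rw [add_comm 1 i, h]
      _ = ((n : ℚ) + 1) * (Fintype.card (Nat.Partition (n + 1)) : ℚ) := hkey.symm
      _ = (Fintype.card (Nat.Partition (n + 1)) : ℚ) * ((n : ℚ) + 1) := mul_comm _ _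
  have hD : d⁄dX ℚ (logPS partitionGF) = d⁄dX ℚ S := by
    have h1 := deriv_logPS_mul partitionGF hf1
    have h2 : d⁄dX ℚ S * partitionGF = d⁄dX ℚ partitionGF := by ext n; exact key n
    exact mul_right_cancel₀ hfne (h1.trans h2.symm)
  have hc : constantCoeff (logPS partitionGF) = constantCoeff S := by
    rw [← coeff_zero_eq_constantCoeff, logPS, coeff_mk, hS, coeff_mk]
    simp
  exact derivative.ext hD hc
end
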